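/- arXiv:1907.11417 — 2 statements merged into one kernel-verified Lean document; each statement's English description precedes it below -/
import Mathlib

section
/- For every m ∈ ℕ, the set of all two-colored partitions p such that (i) every block has at most two legs, (ii) the total color sum Σ(p) ∈ 2mℤ, and (iii) for any two distinct legs α ≠ β of the same block, δ_p(α,β) ∈ m + 2mℤ if α and β have the same normalized color and δ_p(α,β) ∈ 2mℤ if they have different normalized colors, is a category of two-colored partitions. -/
noncomputable section
attribute [local instance] Classical.propDecidable

/-- A two-colored partition: two rows of points colored white (`true`) or black (`false`),
together with a set partition (setoid) of all points into blocks. -/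
structure TCP where
  upper : ℕ
  lower : ℕ
  upColor : Fin upper → Bool
  loColor : Fin lower → Bool
  rel : Setoid (Fin upper ⊕ Fin lower)

namespace TCP

/-- The points of a partition. -/
abbrev Point (p : TCP) := Fin p.upper ⊕ Fin p.lower

/-- Native color of a point. -/
def color (p : TCP) : p.Point → Bool
  | .inl j => p.upColor j
  | .inr i => p.loColor i

/-- Normalized color: inverted on the upper row. -/
def ncolor (p : TCP) : p.Point → Bool
  | .inl j => !(p.upColor j)
  | .inr i => p.loColor i

/-- Sign of a point: `+1` for normalized white, `-1` for normalized black. -/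
def sgn (p : TCP) (x : p.Point) : ℤ := if p.ncolor x then 1 else -1

/-- Color sum of a finite set of points. -/
def csum (p : TCP) (S : Finset p.Point) : ℤ := ∑ x ∈ S, p.sgn x

/-- Total color sum Σ(p). -/
def tsum (p : TCP) : ℤ := p.csum Finset.univ

/-- Total number of points. -/
def size (p : TCP) : ℕ := p.upper + p.lower

/-- Position in the counter-clockwise cyclic order: lower points left to right,
then upper points right to left. -/
def pos (p : TCP) : p.Point → ℕ
  | .inr i => i
  | .inl j => p.lower + (p.upper - 1 - j)

/-- Cyclic position of `y` relative to `x`. -/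
def relpos (p : TCP) (x y : p.Point) : ℕ := (p.size + p.pos y - p.pos x) % p.size

/-- Half-open cyclic interval `]x,y]`. -/
def Ioc (p : TCP) (x y : p.Point) : Finset p.Point :=
  Finset.univ.filter (fun z => 0 < p.relpos x z ∧ p.relpos x z ≤ p.relpos x y)

/-- Open cyclic interval `]x,y[`. -/
def Ioo (p : TCP) (x y : p.Point) : Finset p.Point :=
  Finset.univ.filter (fun z => 0 < p.relpos x z ∧ p.relpos x z < p.relpos x y)

/-- The color distance between two points. -/
def cdist (p : TCP) (x y : p.Point) : ℤ :=
  if x = y then p.tsum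
  else if p.ncolor x = p.ncolor y then p.csum (p.Ioc x y)
  else p.csum (p.Ioo x y)

/-- The block of a point. -/
def blockOf (p : TCP) (x : p.Point) : Finset p.Point :=
  Finset.univ.filter (fun y => p.rel.r x y)

/-- A finite set of points is a block of `p`. -/
def IsBlock (p : TCP) (B : Finset p.Point) : Prop := ∃ x, B = p.blockOf x

/-- `(a,b,c,d)` is ordered in the cyclic order of `p`. -/
def Ordered4 (p : TCP) (a b c d : p.Point) : Prop :=
  0 < p.relpos a b ∧ p.relpos a b < p.relpos a c ∧ p.relpos a c < p.relpos a d

/-- Two sets of points cross each other. -/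
def Cross (p : TCP) (B₁ B₂ : Finset p.Point) : Prop :=
  ∃ a ∈ B₁, ∃ b ∈ B₁, ∃ a' ∈ B₂, ∃ b' ∈ B₂, p.Ordered4 a a' b b'

/-! ### The analyzer -/

/-- Set of block sizes. -/
def Fset (S : Set TCP) : Set ℕ :=
  {n | ∃ p ∈ S, ∃ B : Finset p.Point, p.IsBlock B ∧ B.card = n}

/-- Set of block color sums. -/
def Vset (S : Set TCP) : Set ℤ :=
  {v | ∃ p ∈ S, ∃ B : Finset p.Point, p.IsBlock B ∧ p.csum B = v}

/-- Set of total color sums. -/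
def Sset (S : Set TCP) : Set ℤ := {s | ∃ p ∈ S, p.tsum = s}

/-- Set of color distances between cyclically subsequent legs of the same block
having the same normalized color. -/
def Lset (S : Set TCP) : Set ℤ :=
  {d | ∃ p ∈ S, ∃ B : Finset p.Point, p.IsBlock B ∧ ∃ a ∈ B, ∃ b ∈ B, a ≠ b ∧
        p.Ioo a b ∩ B = ∅ ∧ p.ncolor a = p.ncolor b ∧ p.cdist a b = d}

/-- Set of color distances between cyclically subsequent legs of the same block
having different normalized colors. -/
def Kset (S : Set TCP) : Set ℤ :=
  {d | ∃ p ∈ S, ∃ B : Finset p.Point, p.IsBlock B ∧ ∃ a ∈ B, ∃ b ∈ B, a ≠ b ∧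
        p.Ioo a b ∩ B = ∅ ∧ p.ncolor a ≠ p.ncolor b ∧ p.cdist a b = d}

/-- Set of color distances between legs of two crossing blocks. -/
def Xset (S : Set TCP) : Set ℤ :=
  {d | ∃ p ∈ S, ∃ B₁ B₂ : Finset p.Point, p.IsBlock B₁ ∧ p.IsBlock B₂ ∧ B₁ ≠ B₂ ∧
        p.Cross B₁ B₂ ∧ ∃ a ∈ B₁, ∃ b ∈ B₂, p.cdist a b = d}

/-- The parameter domain. -/
abbrev Param := Set ℕ × Set ℤ × Set ℤ × Set ℤ × Set ℤ × Set ℤ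

/-- The analyzer `Z = (F, V, Σ, L, K, X)`. -/
def Z (S : Set TCP) : Param := (Fset S, Vset S, Sset S, Lset S, Kset S, Xset S)

/-! ### Operations on partitions -/

/-- Componentwise relation on a sum type. -/
def sumRel {α β : Type*} (s : α → α → Prop) (t : β → β → Prop) : α ⊕ β → α ⊕ β → Prop
  | .inl a, .inl b => s a b
  | .inr a, .inr b => t a b
  | _, _ => False

/-- Componentwise setoid on a sum type. -/
def sumSetoid {α β : Type*} (s : Setoid α) (t : Setoid β) : Setoid (α ⊕ β) where
  r := sumRel s.r t.r
  iseqv := by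
    refine ⟨?_, ?_, ?_⟩
    · rintro (a | a) <;> exact Setoid.refl _
    · rintro (a | a) (b | b) h <;> first | exact Setoid.symm h | exact h.elim
    · rintro (a | a) (b | b) (c | c) h₁ h₂ <;>
        first | exact Setoid.trans h₁ h₂ | exact h₁.elim | exact h₂.elim

/-- Identification of the points of a tensor product with a sum of points. -/
def ptmap (p q : TCP) :
    (Fin (p.upper + q.upper) ⊕ Fin (p.lower + q.lower)) → (p.Point ⊕ q.Point)
  | .inl j => (finSumFinEquiv.symm j).elim (fun a => .inl (.inl a)) (fun a => .inr (.inl a))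
  | .inr i => (finSumFinEquiv.symm i).elim (fun a => .inl (.inr a)) (fun a => .inr (.inr a))

/-- Tensor product: horizontal concatenation. -/
def tensor (p q : TCP) : TCP where
  upper := p.upper + q.upper
  lower := p.lower + q.lower
  upColor := fun j => (finSumFinEquiv.symm j).elim p.upColor q.upColor
  loColor := fun i => (finSumFinEquiv.symm i).elim p.loColor q.loColor
  rel := Setoid.comap (ptmap p q) (sumSetoid p.rel q.rel)

/-- Embedding of the points of `p` into the points of `p.tensor q`. -/
def tinl (p q : TCP) : p.Point → (p.tensor q).Point
  | .inl j => Sum.inl (Fin.castAdd q.upper j)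
  | .inr i => Sum.inr (Fin.castAdd q.lower i)

/-- Embedding of the points of `q` into the points of `p.tensor q`. -/
def tinr (p q : TCP) : q.Point → (p.tensor q).Point
  | .inl j => Sum.inl (Fin.natAdd p.upper j)
  | .inr i => Sum.inr (Fin.natAdd p.lower i)

/-- Involution: swapping the rows. -/
def invol (p : TCP) : TCP where
  upper := p.lower
  lower := p.upper
  upColor := p.loColor
  loColor := p.upColor
  rel := Setoid.comap Sum.swap p.rel

/-- `(p, q)` is composable: the upper row of `p` matches the lower row of `q`. -/
structure Composable (p q : TCP) : Prop where
  len : p.upper = q.lower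
  col : ∀ j : Fin p.upper, p.upColor j = q.loColor (Fin.cast len j)

/-- Generating relation for the composition of `p` and `q`. -/
def compRel (p q : TCP) (h : p.upper = q.lower) :
    (q.Point ⊕ p.Point) → (q.Point ⊕ p.Point) → Prop := fun x y =>
  (∃ a b, x = .inl a ∧ y = .inl b ∧ q.rel.r a b) ∨
  (∃ a b, x = .inr a ∧ y = .inr b ∧ p.rel.r a b) ∨
  (∃ j : Fin p.upper, x = .inl (.inr (Fin.cast h j)) ∧ y = .inr (.inl j)) ∨
  (∃ j : Fin p.upper, y = .inl (.inr (Fin.cast h j)) ∧ x = .inr (.inl j))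

/-- Composition: vertical concatenation, with blocks joined along the middle row. -/
def comp (p q : TCP) (h : Composable p q) : TCP where
  upper := q.upper
  lower := p.lower
  upColor := q.upColor
  loColor := p.loColor
  rel := Setoid.comap
    (fun x : Fin q.upper ⊕ Fin p.lower => match x with
      | .inl j => Sum.inl (Sum.inl j : q.Point)
      | .inr i => Sum.inr (Sum.inr i : p.Point))
    (Relation.EqvGen.setoid (compRel p q h.len))

/-- The empty partition. -/
def emptyP : TCP := ⟨0, 0, Fin.elim0, Fin.elim0, ⊤⟩

/-- The identity partition of color `c`: one upper and one lower point of color `c`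
joined in one block. -/
def idPart (c : Bool) : TCP := ⟨1, 1, fun _ => c, fun _ => c, ⊤⟩

/-- The one-row pair partition with two lower points of colors `c₁`, `c₂` in one block. -/
def lpair (c₁ c₂ : Bool) : TCP := ⟨0, 2, Fin.elim0, fun i => if i = 0 then c₁ else c₂, ⊤⟩

/-- A category of two-colored partitions. -/
def IsCategory (C : Set TCP) : Prop :=
  emptyP ∈ C ∧ idPart true ∈ C ∧ idPart false ∈ C ∧
  lpair true false ∈ C ∧ lpair false true ∈ C ∧
  (∀ p q, p ∈ C → q ∈ C → p.tensor q ∈ C) ∧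
  (∀ p, p ∈ C → p.invol ∈ C) ∧
  (∀ p q (h : Composable p q), p ∈ C → q ∈ C → comp p q h ∈ C)

/-! ### Rotations, verticolor reflection, erasing -/

/-- Rotate the leftmost upper point down (identity if the upper row is empty). -/
def rotDownL (p : TCP) : TCP :=
  if h : 0 < p.upper then
    { upper := p.upper - 1
      lower := p.lower + 1
      upColor := fun j => p.upColor ⟨j + 1, by have := j.isLt; omega⟩
      loColor := fun i => Fin.cases (!(p.upColor ⟨0, h⟩)) (fun i' => p.loColor i') i
      rel := Setoid.comap
        (fun x : Fin (p.upper - 1) ⊕ Fin (p.lower + 1) => match x with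
          | .inl j => (Sum.inl ⟨j + 1, by have := j.isLt; omega⟩ : p.Point)
          | .inr i => Fin.cases (Sum.inl ⟨0, h⟩ : p.Point) (fun i' => (Sum.inr i' : p.Point)) i)
        p.rel }
  else p

/-- Rotate the rightmost upper point down (identity if the upper row is empty). -/
def rotDownR (p : TCP) : TCP :=
  if h : 0 < p.upper then
    { upper := p.upper - 1
      lower := p.lower + 1
      upColor := fun j => p.upColor ⟨j, by have := j.isLt; omega⟩
      loColor := fun i =>
        Fin.lastCases (!(p.upColor ⟨p.upper - 1, by omega⟩)) (fun i' => p.loColor i') i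
      rel := Setoid.comap
        (fun x : Fin (p.upper - 1) ⊕ Fin (p.lower + 1) => match x with
          | .inl j => (Sum.inl ⟨j, by have := j.isLt; omega⟩ : p.Point)
          | .inr i => Fin.lastCases (Sum.inl ⟨p.upper - 1, by omega⟩ : p.Point)
              (fun i' => (Sum.inr i' : p.Point)) i)
        p.rel }
  else p

/-- Rotate the leftmost lower point up (identity if the lower row is empty). -/
def rotUpL (p : TCP) : TCP :=
  if h : 0 < p.lower then
    { upper := p.upper + 1
      lower := p.lower - 1
      upColor := fun j => Fin.cases (!(p.loColor ⟨0, h⟩)) (fun j' => p.upColor j') j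
      loColor := fun i => p.loColor ⟨i + 1, by have := i.isLt; omega⟩
      rel := Setoid.comap
        (fun x : Fin (p.upper + 1) ⊕ Fin (p.lower - 1) => match x with
          | .inl j => Fin.cases (Sum.inr ⟨0, h⟩ : p.Point) (fun j' => (Sum.inl j' : p.Point)) j
          | .inr i => (Sum.inr ⟨i + 1, by have := i.isLt; omega⟩ : p.Point))
        p.rel }
  else p

/-- Rotate the rightmost lower point up (identity if the lower row is empty). -/
def rotUpR (p : TCP) : TCP :=
  if h : 0 < p.lower then
    { upper := p.upper + 1
      lower := p.lower - 1
      upColor := fun j =>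
        Fin.lastCases (!(p.loColor ⟨p.lower - 1, by omega⟩)) (fun j' => p.upColor j') j
      loColor := fun i => p.loColor ⟨i, by have := i.isLt; omega⟩
      rel := Setoid.comap
        (fun x : Fin (p.upper + 1) ⊕ Fin (p.lower - 1) => match x with
          | .inl j => Fin.lastCases (Sum.inr ⟨p.lower - 1, by omega⟩ : p.Point)
              (fun j' => (Sum.inl j' : p.Point)) j
          | .inr i => (Sum.inr ⟨i, by have := i.isLt; omega⟩ : p.Point))
        p.rel }
  else p

/-- Verticolor reflection: reverse both rows and invert all colors. -/
def vreflect (p : TCP) : TCP where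
  upper := p.upper
  lower := p.lower
  upColor := fun j => !(p.upColor j.rev)
  loColor := fun i => !(p.loColor i.rev)
  rel := Setoid.comap (Sum.map Fin.rev Fin.rev) p.rel

/-- `{a, b}` is a turn: two cyclically consecutive points of inverse normalized colors. -/
def IsTurn (p : TCP) (a b : p.Point) : Prop :=
  p.relpos a b = 1 ∧ p.ncolor a ≠ p.ncolor b

/-- `e` identifies the points of `q` with the points of `p` outside `{a, b}`, preserving
rows, colors and order, and `q` carries the block structure obtained from `p` by erasing
`{a, b}` and merging all blocks meeting `{a, b}`. -/
def IsErasingMap (p : TCP) (a b : p.Point) (q : TCP) (e : q.Point → p.Point) : Prop :=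
  Function.Injective e ∧
  Set.range e = {x | x ≠ a ∧ x ≠ b} ∧
  (∀ j : Fin q.upper, ∃ j', e (.inl j) = Sum.inl j') ∧
  (∀ i : Fin q.lower, ∃ i', e (.inr i) = Sum.inr i') ∧
  (∀ j₁ j₂ : Fin q.upper, ∀ j₁' j₂' : Fin p.upper,
    e (.inl j₁) = Sum.inl j₁' → e (.inl j₂) = Sum.inl j₂' → (j₁ < j₂ ↔ j₁' < j₂')) ∧
  (∀ i₁ i₂ : Fin q.lower, ∀ i₁' i₂' : Fin p.lower,
    e (.inr i₁) = Sum.inr i₁' → e (.inr i₂) = Sum.inr i₂' → (i₁ < i₂ ↔ i₁' < i₂')) ∧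
  (∀ x, q.color x = p.color (e x)) ∧
  (∀ x y, q.rel.r x y ↔
    (p.rel.r (e x) (e y) ∨
      ((p.rel.r (e x) a ∨ p.rel.r (e x) b) ∧ (p.rel.r (e y) a ∨ p.rel.r (e y) b))))

/-- `q` is obtained from `p` by erasing the turn `{a, b}`. -/
def IsErasing (p : TCP) (a b : p.Point) (q : TCP) : Prop :=
  p.IsTurn a b ∧ ∃ e : q.Point → p.Point, IsErasingMap p a b q e

end TCP

namespace TCPAux
open TCP Finset Relation

/-- prefix color sum -/
def S (p : TCP) (k : ℕ) : ℤ := ∑ z : p.Point, if p.pos z < k then p.sgn z else 0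

/-- offset depending on normalized color -/
def off (m : ℕ) (b : Bool) : ℤ := if b then 0 else (m : ℤ) - 1

/-- the potential -/
def phi (m : ℕ) (p : TCP) (x : p.Point) : ℤ := S p (p.pos x) + off m (p.ncolor x)

lemma pos_lt_size (p : TCP) (x : p.Point) : p.pos x < p.size := by
  rcases x with j | i
  · have := j.isLt; simp only [TCP.pos, TCP.size]; omega
  · have := i.isLt; simp only [TCP.pos, TCP.size]; omega

lemma pos_inj (p : TCP) : Function.Injective p.pos := by
  rintro (j | i) (j' | i') h <;> simp only [TCP.pos] at h
  · have h1 := j.isLt; have h2 := j'.isLt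
    exact congrArg Sum.inl (Fin.ext (by omega))
  · have := j.isLt; have := i'.isLt; omega
  · have := i.isLt; have := j'.isLt; omega
  · exact congrArg Sum.inr (Fin.ext h)

lemma tsum_eq (p : TCP) : p.tsum = ∑ z : p.Point, p.sgn z := rfl

lemma relpos_eq (p : TCP) (x y : p.Point) :
    p.relpos x y = if p.pos x ≤ p.pos y then p.pos y - p.pos x
      else p.size + p.pos y - p.pos x := by
  have hx := pos_lt_size p x; have hy := pos_lt_size p y
  unfold TCP.relpos
  rcases le_or_gt (p.pos x) (p.pos y) with h | h
  · rw [if_pos h]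
    have h2 : p.size + p.pos y - p.pos x = p.size + (p.pos y - p.pos x) := by omega
    rw [h2, Nat.add_mod_left, Nat.mod_eq_of_lt (by omega)]
  · rw [if_neg (not_le.mpr h)]
    exact Nat.mod_eq_of_lt (by omega)

lemma S_succ (p : TCP) (x : p.Point) : S p (p.pos x + 1) = S p (p.pos x) + p.sgn x := by
  unfold S
  have hsx : p.sgn x = ∑ z : p.Point, if z = x then p.sgn z else 0 := by
    rw [Finset.sum_ite_eq' _ x p.sgn]; simp
  rw [hsx, ← Finset.sum_add_distrib]
  apply Finset.sum_congr rfl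
  intro z _
  by_cases hz : z = x
  · subst hz; simp
  · have hne : p.pos z ≠ p.pos x := fun h => hz (pos_inj p h)
    have h2 : (p.pos z < p.pos x + 1) = (p.pos z < p.pos x) := by
      apply propext; omega
    simp [hz, h2]

lemma csum_filter (p : TCP) (q : p.Point → Prop) :
    p.csum (Finset.univ.filter q) = ∑ z : p.Point, if q z then p.sgn z else 0 := by
  unfold TCP.csum; rw [Finset.sum_filter]

lemma csum_Ioc (p : TCP) {x y : p.Point} (hxy : x ≠ y) :
    p.csum (p.Ioc x y) = S p (p.pos y + 1) - S p (p.pos x + 1)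
      + (if p.pos y < p.pos x then p.tsum else 0) := by
  have hx := pos_lt_size p x; have hy := pos_lt_size p y
  have hne : p.pos x ≠ p.pos y := fun h => hxy (pos_inj p h)
  unfold TCP.Ioc TCP.csum
  rw [Finset.sum_filter]
  unfold S
  rw [tsum_eq]
  rcases lt_or_ge (p.pos y) (p.pos x) with h | h
  · rw [if_pos h, sub_eq_add_neg, ← Finset.sum_neg_distrib, ← Finset.sum_add_distrib,
      ← Finset.sum_add_distrib]
    apply Finset.sum_congr rfl
    intro z _
    have hz := pos_lt_size p z
    rw [relpos_eq, relpos_eq]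
    split_ifs <;> first | omega | ring1 | (exfalso; omega)
  · rw [if_neg (by omega), sub_eq_add_neg, ← Finset.sum_neg_distrib, ← Finset.sum_add_distrib,
      add_zero]
    apply Finset.sum_congr rfl
    intro z _
    have hz := pos_lt_size p z
    rw [relpos_eq, relpos_eq]
    split_ifs <;> first | omega | ring1 | (exfalso; omega)

lemma relpos_pos (p : TCP) {x y : p.Point} (hxy : x ≠ y) : 0 < p.relpos x y := by
  have hx := pos_lt_size p x; have hy := pos_lt_size p y
  have hne : p.pos x ≠ p.pos y := fun h => hxy (pos_inj p h)
  rw [relpos_eq]; split_ifs <;> omega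

lemma csum_Ioo (p : TCP) {x y : p.Point} (hxy : x ≠ y) :
    p.csum (p.Ioo x y) = p.csum (p.Ioc x y) - p.sgn y := by
  have hx := pos_lt_size p x; have hy := pos_lt_size p y
  have hne : p.pos x ≠ p.pos y := fun h => hxy (pos_inj p h)
  unfold TCP.Ioo TCP.Ioc TCP.csum
  rw [Finset.sum_filter, Finset.sum_filter]
  have hsy : p.sgn y = ∑ z : p.Point, if z = y then p.sgn z else 0 := by
    rw [Finset.sum_ite_eq' _ y p.sgn]; simp
  rw [hsy, sub_eq_add_neg, ← Finset.sum_neg_distrib, ← Finset.sum_add_distrib]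
  apply Finset.sum_congr rfl
  intro z _
  have hz := pos_lt_size p z
  by_cases hzy : z = y
  · subst hzy
    have h1 : 0 < p.relpos x z := relpos_pos p hxy
    rw [if_neg (by omega), if_pos (by omega)]
    simp
  · have hnzy : p.pos z ≠ p.pos y := fun h => hzy (pos_inj p h)
    simp only [if_neg hzy]
    have hrr : p.relpos x z ≠ p.relpos x y := by
      rw [relpos_eq, relpos_eq]; split_ifs <;> omega
    have h2 : (0 < p.relpos x z ∧ p.relpos x z < p.relpos x y)
        = (0 < p.relpos x z ∧ p.relpos x z ≤ p.relpos x y) := by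
      apply propext; constructor <;> rintro ⟨a, b⟩ <;> exact ⟨a, by omega⟩
    rw [neg_zero, add_zero]
    exact if_congr (iff_of_eq h2) rfl rfl

lemma dvd_iff_zmod (m : ℕ) (a : ℤ) : (2*(m:ℤ)) ∣ a ↔ ((a : ZMod (2*m)) = 0) := by
  have h : ((2*m : ℕ) : ℤ) = 2*(m:ℤ) := by push_cast; ring
  rw [← h]
  exact (ZMod.intCast_zmod_eq_zero_iff_dvd a (2*m)).symm

end TCPAux
namespace TCPAux
open TCP Finset Relation

lemma sgn_cast_cases (p : TCP) (x : p.Point) :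
    (p.ncolor x = true ∧ p.sgn x = 1) ∨ (p.ncolor x = false ∧ p.sgn x = -1) := by
  unfold TCP.sgn
  cases h : p.ncolor x <;> simp [h]

lemma cdist_key (m : ℕ) (p : TCP) (hts : (2*(m:ℤ)) ∣ p.tsum) {x y : p.Point} (hxy : x ≠ y) :
    (2*(m:ℤ)) ∣ (p.cdist x y - (if p.ncolor x = p.ncolor y then (m:ℤ) else 0))
      + (phi m p x - phi m p y - m) := by
  have hts' : ((p.tsum : ZMod (2*m))) = 0 := (dvd_iff_zmod m _).mp hts
  have hm2 : ((m : ZMod (2*m))) + (m : ZMod (2*m)) = 0 := by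
    rw [← Nat.cast_add]
    have : m + m = 2*m := by ring
    rw [this, ZMod.natCast_self]
  unfold TCP.cdist
  rw [if_neg hxy]
  by_cases hc : p.ncolor x = p.ncolor y
  · rw [if_pos hc, if_pos hc, csum_Ioc p hxy, S_succ, S_succ]
    unfold phi
    have hs : p.sgn x = p.sgn y := by unfold TCP.sgn; rw [hc]
    rw [dvd_iff_zmod]
    have hs' := congrArg (fun t : ℤ => (t : ZMod (2*m))) hs
    rw [hc]
    split_ifs with hw
    · push_cast
      rw [hts'] at *
      push_cast at hs'
      linear_combination (-1 : ZMod (2*m)) * hs' - hm2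
    · push_cast
      push_cast at hs'
      linear_combination (-1 : ZMod (2*m)) * hs' - hm2
  · rw [if_neg hc, if_neg hc, csum_Ioo p hxy, csum_Ioc p hxy, S_succ, S_succ]
    unfold phi
    rw [dvd_iff_zmod, sub_zero]
    rcases sgn_cast_cases p x with ⟨hnx, hsx⟩ | ⟨hnx, hsx⟩ <;>
      rcases sgn_cast_cases p y with ⟨hny, hsy⟩ | ⟨hny, hsy⟩
    · exact absurd (hnx.trans hny.symm) hc
    · rw [hsx, hsy, hnx, hny]
      unfold off
      simp only [if_pos, if_neg Bool.false_ne_true, ite_true]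
      split_ifs
      · push_cast
        rw [hts']
        linear_combination -hm2
      · push_cast
        linear_combination -hm2
    · rw [hsx, hsy, hnx, hny]
      unfold off
      simp only [if_pos, if_neg Bool.false_ne_true, ite_true]
      split_ifs
      · push_cast
        rw [hts']
        linear_combination (0 : ZMod (2*m))
      · push_cast
        linear_combination (0 : ZMod (2*m))
    · exact absurd (hnx.trans hny.symm) hc

/-- reformulation of membership in the set -/
def Good (m : ℕ) (p : TCP) : Prop :=
  (∀ x y z : p.Point, p.rel.r x y → p.rel.r x z → x = y ∨ x = z ∨ y = z) ∧
  ((2*(m:ℤ)) ∣ p.tsum) ∧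
  (∀ x y : p.Point, p.rel.r x y → x ≠ y → (2*(m:ℤ)) ∣ (phi m p x - phi m p y - (m:ℤ)))

lemma mem_blockOf {p : TCP} {x y : p.Point} : y ∈ p.blockOf x ↔ p.rel.r x y := by
  unfold TCP.blockOf
  simp

lemma good_iff (m : ℕ) (p : TCP) :
    ((∀ B : Finset p.Point, p.IsBlock B → B.card ≤ 2) ∧
      ((2 * (m:ℤ)) ∣ p.tsum) ∧
      (∀ B : Finset p.Point, p.IsBlock B → ∀ a ∈ B, ∀ b ∈ B, a ≠ b →
        ((p.ncolor a = p.ncolor b → (2 * (m:ℤ)) ∣ (p.cdist a b - m)) ∧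
         (p.ncolor a ≠ p.ncolor b → (2 * (m:ℤ)) ∣ p.cdist a b)))) ↔ Good m p := by
  constructor
  · rintro ⟨h1, h2, h3⟩
    refine ⟨?_, h2, ?_⟩
    · intro x y z hxy hxz
      by_contra hcon
      push_neg at hcon
      obtain ⟨hne1, hne2, hne3⟩ := hcon
      have hsub : ({x, y, z} : Finset p.Point) ⊆ p.blockOf x := by
        intro w hw
        simp only [Finset.mem_insert, Finset.mem_singleton] at hw
        rcases hw with rfl | rfl | rfl
        · exact mem_blockOf.mpr (p.rel.refl _)
        · exact mem_blockOf.mpr hxy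
        · exact mem_blockOf.mpr hxz
      have hcard : ({x, y, z} : Finset p.Point).card = 3 := by
        rw [Finset.card_insert_of_notMem (by simp [hne1, hne2]),
          Finset.card_insert_of_notMem (by simp [hne3]), Finset.card_singleton]
      have := Finset.card_le_card hsub
      have := h1 (p.blockOf x) ⟨x, rfl⟩
      omega
    · intro x y hr hne
      have hpair := h3 (p.blockOf x) ⟨x, rfl⟩ x (mem_blockOf.mpr (p.rel.refl x))
        y (mem_blockOf.mpr hr) hne
      have hkey := cdist_key m p h2 hne
      have hd : (2*(m:ℤ)) ∣ (p.cdist x y - (if p.ncolor x = p.ncolor y then (m:ℤ) else 0)) := by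
        by_cases hc : p.ncolor x = p.ncolor y
        · rw [if_pos hc]; exact hpair.1 hc
        · rw [if_neg hc, sub_zero]; exact hpair.2 hc
      have := dvd_sub hkey hd
      have heq : (p.cdist x y - (if p.ncolor x = p.ncolor y then (m:ℤ) else 0))
          + (phi m p x - phi m p y - m)
          - (p.cdist x y - (if p.ncolor x = p.ncolor y then (m:ℤ) else 0))
          = phi m p x - phi m p y - m := by ring
      rwa [heq] at this
  · rintro ⟨h1, h2, h3⟩
    refine ⟨?_, h2, ?_⟩
    · rintro B ⟨x, rfl⟩
      by_contra hcon
      push_neg at hcon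
      obtain ⟨a, b, c, ha, hb, hc, hab, hac, hbc⟩ := Finset.two_lt_card_iff.mp hcon
      have hra := mem_blockOf.mp ha
      have hrb := mem_blockOf.mp hb
      have hrc := mem_blockOf.mp hc
      have := h1 a b c (p.rel.trans (p.rel.symm hra) hrb) (p.rel.trans (p.rel.symm hra) hrc)
      tauto
    · rintro B ⟨x, rfl⟩ a ha b hb hab
      have hra := mem_blockOf.mp ha
      have hrb := mem_blockOf.mp hb
      have hr : p.rel.r a b := p.rel.trans (p.rel.symm hra) hrb
      have hphi := h3 a b hr hab
      have hkey := cdist_key m p h2 hab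
      have hd : (2*(m:ℤ)) ∣ (p.cdist a b - (if p.ncolor a = p.ncolor b then (m:ℤ) else 0)) := by
        have heq : (p.cdist a b - (if p.ncolor a = p.ncolor b then (m:ℤ) else 0))
            = ((p.cdist a b - (if p.ncolor a = p.ncolor b then (m:ℤ) else 0))
              + (phi m p a - phi m p b - m)) - (phi m p a - phi m p b - m) := by ring
        rw [heq]
        exact dvd_sub hkey hphi
      constructor
      · intro hc
        rw [if_pos hc] at hd
        exact hd
      · intro hc
        rw [if_neg hc, sub_zero] at hd
        exact hd

end TCPAux
namespace TCPAux
open TCP Finset Relation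

lemma good_empty (m : ℕ) : Good m TCP.emptyP := by
  have he : IsEmpty (TCP.emptyP.Point) := by
    constructor; rintro (j | j) <;> exact j.elim0
  refine ⟨fun x => isEmptyElim x, ?_, fun x => isEmptyElim x⟩
  have h0 : TCP.emptyP.tsum = 0 := by
    rw [tsum_eq]
    exact Finset.sum_of_isEmpty _
  rw [h0]
  exact dvd_zero _

lemma good_idPart (m : ℕ) (c : Bool) : Good m (TCP.idPart c) := by
  have hu : (TCP.idPart c).upper = 1 := rfl
  have hl : (TCP.idPart c).lower = 1 := rfl
  have keyU : ∀ a b : Fin (TCP.idPart c).upper, a = b := by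
    intro a b
    have ha : (a : ℕ) < 1 := a.isLt
    have hb : (b : ℕ) < 1 := b.isLt
    exact Fin.ext (by omega)
  have keyL : ∀ a b : Fin (TCP.idPart c).lower, a = b := by
    intro a b
    have ha : (a : ℕ) < 1 := a.isLt
    have hb : (b : ℕ) < 1 := b.isLt
    exact Fin.ext (by omega)
  refine ⟨?_, ?_, ?_⟩
  · rintro (x | x) (y | y) (z | z) _ _ <;>
      first
        | exact Or.inl (congrArg _ (keyU _ _))
        | exact Or.inl (congrArg _ (keyL _ _))
        | exact Or.inr (Or.inl (congrArg _ (keyU _ _)))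
        | exact Or.inr (Or.inl (congrArg _ (keyL _ _)))
        | exact Or.inr (Or.inr (congrArg _ (keyU _ _)))
        | exact Or.inr (Or.inr (congrArg _ (keyL _ _)))
  · have h0 : (TCP.idPart c).tsum = 0 := by
      rw [tsum_eq]
      cases c <;> decide
    rw [h0]; exact dvd_zero _
  · have hphi1 : phi m (TCP.idPart c) (Sum.inl ⟨0, by rw [hu]; omega⟩)
        = cond c (m:ℤ) (-1) := by
      cases c
      · show S (TCP.idPart false) 1 + _ = _
        rw [show S (TCP.idPart false) 1 = -1 by decide]; simp [off, TCP.ncolor, TCP.idPart]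
      · show S (TCP.idPart true) 1 + _ = _
        rw [show S (TCP.idPart true) 1 = 1 by decide]; simp [off, TCP.ncolor, TCP.idPart]
    have hphi0 : phi m (TCP.idPart c) (Sum.inr ⟨0, by rw [hl]; omega⟩)
        = cond c 0 ((m:ℤ) - 1) := by
      cases c <;>
        simp [phi, S, off, TCP.idPart, TCP.sgn, TCP.ncolor, TCP.pos, Fintype.sum_sum_type]
    rintro (x | x) (y | y) _ hne
    · exact absurd (congrArg _ (keyU _ _)) hne
    · rw [keyU x ⟨0, by rw [hu]; omega⟩, keyL y ⟨0, by rw [hl]; omega⟩, hphi1, hphi0]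
      cases c <;> simp only [Bool.cond_true, Bool.cond_false] <;>
        first | exact ⟨0, by ring1⟩ | exact ⟨1, by ring1⟩ | exact ⟨-1, by ring1⟩
    · rw [keyL x ⟨0, by rw [hl]; omega⟩, keyU y ⟨0, by rw [hu]; omega⟩, hphi1, hphi0]
      cases c <;> simp only [Bool.cond_true, Bool.cond_false] <;>
        first | exact ⟨0, by ring1⟩ | exact ⟨1, by ring1⟩ | exact ⟨-1, by ring1⟩
    · exact absurd (congrArg _ (keyL _ _)) hne

lemma good_lpair (m : ℕ) (c : Bool) : Good m (TCP.lpair c (!c)) := by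
  have hu : (TCP.lpair c (!c)).upper = 0 := rfl
  have hl : (TCP.lpair c (!c)).lower = 2 := rfl
  have keyU : ∀ a : Fin (TCP.lpair c (!c)).upper, False := by
    intro a
    have ha : (a : ℕ) < 0 := a.isLt
    omega
  have keyL : ∀ a : Fin (TCP.lpair c (!c)).lower,
      a = ⟨0, by rw [hl]; omega⟩ ∨ a = ⟨1, by rw [hl]; omega⟩ := by
    intro a
    have ha : (a : ℕ) < 2 := a.isLt
    have h01 : (a : ℕ) = 0 ∨ (a : ℕ) = 1 := by omega
    rcases h01 with h | h
    · exact Or.inl (Fin.ext h)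
    · exact Or.inr (Fin.ext h)
  refine ⟨?_, ?_, ?_⟩
  · rintro (x | x) (y | y) (z | z) _ _ <;>
      first
        | exact (keyU x).elim
        | exact (keyU y).elim
        | exact (keyU z).elim
        | (rcases keyL x with hx | hx <;> rcases keyL y with hy | hy <;>
            rcases keyL z with hz | hz <;> subst hx <;> subst hy <;> subst hz <;> simp)
  · have h0 : (TCP.lpair c (!c)).tsum = 0 := by
      rw [tsum_eq]
      cases c <;> decide
    rw [h0]; exact dvd_zero _
  · have hphi0 : phi m (TCP.lpair c (!c)) (Sum.inr ⟨0, by rw [hl]; omega⟩)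
        = cond c 0 ((m:ℤ) - 1) := by
      cases c <;>
        simp [phi, S, off, TCP.lpair, TCP.sgn, TCP.ncolor, TCP.pos, Fintype.sum_sum_type,
          Fin.sum_univ_two]
    have hphi1 : phi m (TCP.lpair c (!c)) (Sum.inr ⟨1, by rw [hl]; omega⟩)
        = cond c (m:ℤ) (-1) := by
      cases c
      · show S (TCP.lpair false (!false)) 1 + _ = _
        rw [show S (TCP.lpair false (!false)) 1 = -1 by decide]; simp [off, TCP.ncolor, TCP.lpair]
      · show S (TCP.lpair true (!true)) 1 + _ = _
        rw [show S (TCP.lpair true (!true)) 1 = 1 by decide]; simp [off, TCP.ncolor, TCP.lpair]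
    rintro (x | x) (y | y) hr hne
    · exact (keyU x).elim
    · exact (keyU x).elim
    · exact (keyU y).elim
    rcases keyL x with hx | hx <;> rcases keyL y with hy | hy <;> subst hx <;> subst hy
    · exact absurd rfl hne
    · rw [hphi0, hphi1]
      cases c <;> simp only [Bool.cond_true, Bool.cond_false] <;>
        first | exact ⟨0, by ring1⟩ | exact ⟨1, by ring1⟩ | exact ⟨-1, by ring1⟩
    · rw [hphi1, hphi0]
      cases c <;> simp only [Bool.cond_true, Bool.cond_false] <;>
        first | exact ⟨0, by ring1⟩ | exact ⟨1, by ring1⟩ | exact ⟨-1, by ring1⟩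
    · exact absurd rfl hne

end TCPAux
namespace TCPAux
open TCP Finset Relation

/-- identification of points of a tensor product -/
def te (p q : TCP) : p.Point ⊕ q.Point → (p.tensor q).Point :=
  Sum.elim (TCP.tinl p q) (TCP.tinr p q)

lemma ptmap_te (p q : TCP) (z : p.Point ⊕ q.Point) : TCP.ptmap p q (te p q z) = z := by
  rcases z with (j | i) | (j | i) <;>
    simp [te, TCP.ptmap, TCP.tinl, TCP.tinr,
      finSumFinEquiv_symm_apply_castAdd, finSumFinEquiv_symm_apply_natAdd]

lemma te_inj (p q : TCP) : Function.Injective (te p q) :=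
  Function.LeftInverse.injective (g := TCP.ptmap p q) (ptmap_te p q)

lemma te_bij (p q : TCP) : Function.Bijective (te p q) := by
  rw [Fintype.bijective_iff_injective_and_card]
  refine ⟨te_inj p q, ?_⟩
  show Fintype.card (p.Point ⊕ q.Point)
    = Fintype.card (Fin (p.upper + q.upper) ⊕ Fin (p.lower + q.lower))
  simp [Fintype.card_sum]
  omega

lemma rel_te (p q : TCP) (z w : p.Point ⊕ q.Point) :
    (p.tensor q).rel.r (te p q z) (te p q w) ↔ TCP.sumRel p.rel.r q.rel.r z w := by
  show (TCP.sumSetoid p.rel q.rel).r (TCP.ptmap p q (te p q z)) (TCP.ptmap p q (te p q w)) ↔ _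
  rw [ptmap_te, ptmap_te]
  rfl

lemma ncolor_te (p q : TCP) (z : p.Point ⊕ q.Point) :
    (p.tensor q).ncolor (te p q z) = Sum.elim p.ncolor q.ncolor z := by
  rcases z with (j | i) | (j | i) <;>
    simp only [te, Sum.elim_inl, Sum.elim_inr, TCP.tinl, TCP.tinr] <;>
    simp [te, TCP.tinl, TCP.tinr, TCP.ncolor, TCP.tensor,
      finSumFinEquiv_symm_apply_castAdd, finSumFinEquiv_symm_apply_natAdd]

lemma sgn_te (p q : TCP) (z : p.Point ⊕ q.Point) :
    (p.tensor q).sgn (te p q z) = Sum.elim p.sgn q.sgn z := by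
  rcases z with z | z <;> (unfold TCP.sgn; rw [ncolor_te]; rfl)

lemma pos_te_pl (p q : TCP) (i : Fin p.lower) :
    (p.tensor q).pos (te p q (.inl (.inr i))) = p.pos (.inr i) := by
  simp [te, TCP.tinl, TCP.pos]

lemma pos_te_pu (p q : TCP) (j : Fin p.upper) :
    (p.tensor q).pos (te p q (.inl (.inl j))) = p.pos (.inl j) + q.size := by
  have hj := j.isLt
  show (p.lower + q.lower) + (p.upper + q.upper - 1 - (j : ℕ))
    = (p.lower + (p.upper - 1 - (j:ℕ))) + (q.upper + q.lower)
  omega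

lemma pos_te_ql (p q : TCP) (i : Fin q.lower) :
    (p.tensor q).pos (te p q (.inr (.inr i))) = p.lower + q.pos (.inr i) := by
  simp [te, TCP.tinr, TCP.pos]

lemma pos_te_qu (p q : TCP) (j : Fin q.upper) :
    (p.tensor q).pos (te p q (.inr (.inl j))) = p.lower + q.pos (.inl j) := by
  have hj := j.isLt
  show (p.lower + q.lower) + (p.upper + q.upper - 1 - (p.upper + (j : ℕ)))
    = p.lower + (q.lower + (q.upper - 1 - (j:ℕ)))
  omega

/-- color sum of the lower row -/
def Lsum (p : TCP) : ℤ := ∑ i : Fin p.lower, p.sgn (.inr i)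

/-- color sum of the upper row -/
def Usum (p : TCP) : ℤ := ∑ j : Fin p.upper, p.sgn (.inl j)

lemma tsum_split (p : TCP) : p.tsum = Usum p + Lsum p := by
  rw [tsum_eq, Fintype.sum_sum_type]; rfl

lemma S_te (p q : TCP) (K : ℕ) :
    S (p.tensor q) K
      = (∑ z : p.Point, if (p.tensor q).pos (te p q (.inl z)) < K then p.sgn z else 0)
      + (∑ z : q.Point, if (p.tensor q).pos (te p q (.inr z)) < K then q.sgn z else 0) := by
  unfold S
  rw [← Fintype.sum_bijective (te p q) (te_bij p q) _ _ (fun z => rfl), Fintype.sum_sum_type]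
  congr 1
  · apply Finset.sum_congr rfl; intro z _; rw [sgn_te]; rfl
  · apply Finset.sum_congr rfl; intro z _; rw [sgn_te]; rfl

lemma S_te_pl (p q : TCP) (i : Fin p.lower) :
    S (p.tensor q) ((p.tensor q).pos (te p q (.inl (.inr i)))) = S p (p.pos (.inr i)) := by
  rw [S_te, pos_te_pl]
  have hi : p.pos (Sum.inr i) < p.lower := i.isLt
  have h2 : (∑ z : q.Point,
      if (p.tensor q).pos (te p q (.inr z)) < p.pos (.inr i) then q.sgn z else 0) = 0 := by
    apply Finset.sum_eq_zero; intro z _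
    rcases z with j | j
    · rw [pos_te_qu]; rw [if_neg (by omega)]
    · rw [pos_te_ql]; rw [if_neg (by omega)]
  rw [h2, add_zero]
  unfold S
  apply Finset.sum_congr rfl; intro z _
  rcases z with j | j
  · rw [pos_te_pu]
    have := pos_lt_size p (Sum.inl j)
    have hp : p.lower ≤ p.pos (Sum.inl j) := by
      show p.lower ≤ p.lower + (p.upper - 1 - (j:ℕ)); omega
    rw [if_neg (by omega), if_neg (by omega)]
  · rw [pos_te_pl]

lemma S_te_pu (p q : TCP) (j : Fin p.upper) :
    S (p.tensor q) ((p.tensor q).pos (te p q (.inl (.inl j))))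
      = S p (p.pos (.inl j)) + q.tsum := by
  rw [S_te, pos_te_pu]
  have hp : p.lower ≤ p.pos (Sum.inl j) := by
    show p.lower ≤ p.lower + (p.upper - 1 - (j:ℕ)); omega
  have h2 : (∑ z : q.Point,
      if (p.tensor q).pos (te p q (.inr z)) < p.pos (.inl j) + q.size then q.sgn z else 0)
      = q.tsum := by
    rw [tsum_eq]
    apply Finset.sum_congr rfl; intro z _
    have hz := pos_lt_size q z
    rcases z with i | i
    · rw [pos_te_qu, if_pos (by omega)]
    · rw [pos_te_ql, if_pos (by omega)]
  rw [h2]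
  congr 1
  unfold S
  apply Finset.sum_congr rfl; intro z _
  rcases z with i | i
  · rw [pos_te_pu]
    exact if_congr (by omega) rfl rfl
  · rw [pos_te_pl]
    have h4 : p.pos (Sum.inr i) < p.lower := i.isLt
    rw [if_pos (by omega), if_pos (by omega)]

lemma S_te_q (p q : TCP) (x : q.Point) :
    S (p.tensor q) ((p.tensor q).pos (te p q (.inr x))) = S q (q.pos x) + Lsum p := by
  rw [S_te]
  have hx := pos_lt_size q x
  have h1 : (∑ z : p.Point,
      if (p.tensor q).pos (te p q (.inl z)) < (p.tensor q).pos (te p q (.inr x))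
      then p.sgn z else 0) = Lsum p := by
    have hK : (p.tensor q).pos (te p q (.inr x)) = p.lower + q.pos x := by
      rcases x with i | i
      · exact pos_te_qu p q i
      · exact pos_te_ql p q i
    rw [hK, Fintype.sum_sum_type]
    have hu0 : (∑ z : Fin p.upper,
        if (p.tensor q).pos (te p q (.inl (.inl z))) < p.lower + q.pos x
        then p.sgn (.inl z) else 0) = 0 := by
      apply Finset.sum_eq_zero; intro z _
      rw [pos_te_pu]
      have : p.lower ≤ p.pos (Sum.inl z) := by
        show p.lower ≤ p.lower + (p.upper - 1 - (z:ℕ)); omega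
      have hx2 : q.pos x < q.upper + q.lower := pos_lt_size q x
      rw [if_neg (by show ¬ (p.pos (Sum.inl z) + (q.upper + q.lower) < p.lower + q.pos x); omega)]
    rw [hu0, zero_add]
    unfold Lsum
    apply Finset.sum_congr rfl; intro z _
    rw [pos_te_pl]
    have : p.pos (Sum.inr z) < p.lower := z.isLt
    rw [if_pos (by omega)]
  rw [h1]
  have hK : (p.tensor q).pos (te p q (.inr x)) = p.lower + q.pos x := by
    rcases x with i | i
    · exact pos_te_qu p q i
    · exact pos_te_ql p q i
  have h2 : (∑ z : q.Point,
      if (p.tensor q).pos (te p q (.inr z)) < (p.tensor q).pos (te p q (.inr x))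
      then q.sgn z else 0) = S q (q.pos x) := by
    unfold S
    apply Finset.sum_congr rfl; intro z _
    have hKz : (p.tensor q).pos (te p q (.inr z)) = p.lower + q.pos z := by
      rcases z with i | i
      · exact pos_te_qu p q i
      · exact pos_te_ql p q i
    rw [hKz, hK]
    exact if_congr (by omega) rfl rfl
  rw [h2, add_comm]

lemma tsum_te (p q : TCP) : (p.tensor q).tsum = p.tsum + q.tsum := by
  rw [tsum_eq, tsum_eq, tsum_eq,
    ← Fintype.sum_bijective (te p q) (te_bij p q) _ _ (fun z => rfl), Fintype.sum_sum_type]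
  congr 1
  · apply Finset.sum_congr rfl; intro z _; rw [sgn_te]; rfl
  · apply Finset.sum_congr rfl; intro z _; rw [sgn_te]; rfl

lemma phi_te_p (m : ℕ) (p q : TCP) (hq : (2*(m:ℤ)) ∣ q.tsum) (x : p.Point) :
    ∃ t : ℤ, (2*(m:ℤ)) ∣ t ∧ phi m (p.tensor q) (te p q (.inl x)) = phi m p x + t := by
  unfold phi
  have hnc : (p.tensor q).ncolor (te p q (.inl x)) = p.ncolor x := by rw [ncolor_te]; rfl
  rcases x with j | i
  · exact ⟨q.tsum, hq, by rw [S_te_pu, hnc]; ring⟩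
  · exact ⟨0, dvd_zero _, by rw [S_te_pl, hnc]; ring⟩

lemma phi_te_q (m : ℕ) (p q : TCP) (x : q.Point) :
    phi m (p.tensor q) (te p q (.inr x)) = phi m q x + Lsum p := by
  unfold phi
  have hnc : (p.tensor q).ncolor (te p q (.inr x)) = q.ncolor x := by rw [ncolor_te]; rfl
  rw [S_te_q, hnc]; ring

lemma good_tensor (m : ℕ) (p q : TCP) (hp : Good m p) (hq : Good m q) :
    Good m (p.tensor q) := by
  obtain ⟨hp1, hp2, hp3⟩ := hp
  obtain ⟨hq1, hq2, hq3⟩ := hq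
  refine ⟨?_, ?_, ?_⟩
  · intro x y z hxy hxz
    obtain ⟨a, rfl⟩ := (te_bij p q).2 x
    obtain ⟨b, rfl⟩ := (te_bij p q).2 y
    obtain ⟨c, rfl⟩ := (te_bij p q).2 z
    rw [rel_te] at hxy hxz
    rcases a with a | a <;> rcases b with b | b <;> rcases c with c | c <;>
      first
        | exact hxy.elim
        | exact hxz.elim
        | (refine (hp1 a b c hxy hxz).imp ?_ ?_ <;>
            first
              | exact fun h => congrArg _ (congrArg _ h)
              | exact fun h => h.imp (fun h2 => congrArg _ (congrArg _ h2))
                  (fun h2 => congrArg _ (congrArg _ h2)))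
        | (refine (hq1 a b c hxy hxz).imp ?_ ?_ <;>
            first
              | exact fun h => congrArg _ (congrArg _ h)
              | exact fun h => h.imp (fun h2 => congrArg _ (congrArg _ h2))
                  (fun h2 => congrArg _ (congrArg _ h2)))
  · rw [tsum_te]
    exact dvd_add hp2 hq2
  · intro x y hr hne
    obtain ⟨a, rfl⟩ := (te_bij p q).2 x
    obtain ⟨b, rfl⟩ := (te_bij p q).2 y
    rw [rel_te] at hr
    rcases a with a | a <;> rcases b with b | b
    · obtain ⟨t1, ht1, he1⟩ := phi_te_p m p q hq2 a
      obtain ⟨t2, ht2, he2⟩ := phi_te_p m p q hq2 b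
      rw [he1, he2]
      have hab : a ≠ b := fun h => hne (by rw [h])
      have h3 := hp3 a b hr hab
      have heq : phi m p a + t1 - (phi m p b + t2) - (m:ℤ)
          = (phi m p a - phi m p b - m) + t1 - t2 := by ring
      rw [heq]
      exact dvd_sub (dvd_add h3 ht1) ht2
    · exact hr.elim
    · exact hr.elim
    · rw [phi_te_q, phi_te_q]
      have hab : a ≠ b := fun h => hne (by rw [h])
      have h3 := hq3 a b hr hab
      have heq : phi m q a + Lsum p - (phi m q b + Lsum p) - (m:ℤ)
          = phi m q a - phi m q b - m := by ring
      rw [heq]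
      exact h3

end TCPAux
namespace TCPAux
open TCP Finset Relation

lemma swap_bij (p : TCP) :
    Function.Bijective (Sum.swap : p.Point → p.invol.Point) :=
  Function.bijective_iff_has_inverse.mpr ⟨Sum.swap, Sum.swap_swap, Sum.swap_swap⟩

lemma rel_inv (p : TCP) (x y : p.Point) :
    p.invol.rel.r (Sum.swap x) (Sum.swap y) ↔ p.rel.r x y := by
  show p.rel.r (Sum.swap (Sum.swap x)) (Sum.swap (Sum.swap y)) ↔ _
  rw [Sum.swap_swap, Sum.swap_swap]

lemma ncolor_inv (p : TCP) (x : p.Point) :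
    p.invol.ncolor (Sum.swap x) = !(p.ncolor x) := by
  rcases x with j | i <;> simp [TCP.ncolor, TCP.invol, Bool.not_not]

lemma sgn_inv (p : TCP) (x : p.Point) : p.invol.sgn (Sum.swap x) = - p.sgn x := by
  unfold TCP.sgn
  rw [ncolor_inv]
  cases p.ncolor x <;> simp

lemma pos_inv (p : TCP) (x : p.Point) :
    p.invol.pos (Sum.swap x) = p.size - 1 - p.pos x := by
  rcases x with j | i
  · have := j.isLt
    show (j:ℕ) = (p.upper + p.lower) - 1 - (p.lower + (p.upper - 1 - (j:ℕ)))
    omega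
  · have := i.isLt
    show p.upper + (p.lower - 1 - (i:ℕ)) = (p.upper + p.lower) - 1 - (i:ℕ)
    omega

lemma tsum_inv (p : TCP) : p.invol.tsum = - p.tsum := by
  rw [tsum_eq, tsum_eq]
  have hb : (∑ z : p.invol.Point, p.invol.sgn z)
      = ∑ z : p.Point, p.invol.sgn (Sum.swap z) :=
    (Fintype.sum_bijective _ (swap_bij p) _ _ (fun z => rfl)).symm
  rw [hb, ← Finset.sum_neg_distrib]
  apply Finset.sum_congr rfl
  intro z _
  rw [sgn_inv]

lemma upper_sum_eq (p : TCP) (x : p.Point) :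
    (∑ z : p.Point, if p.pos x < p.pos z then p.sgn z else 0)
      = p.tsum - S p (p.pos x) - p.sgn x := by
  have hsum : p.tsum = S p (p.pos x)
      + ((∑ z : p.Point, if z = x then p.sgn z else 0)
      + ∑ z : p.Point, (if p.pos x < p.pos z then p.sgn z else 0)) := by
    rw [tsum_eq]
    unfold S
    rw [← Finset.sum_add_distrib, ← Finset.sum_add_distrib]
    apply Finset.sum_congr rfl
    intro z _
    by_cases hz : z = x
    · subst hz; simp
    · have hne : p.pos z ≠ p.pos x := fun h => hz (pos_inj p h)
      simp only [if_neg hz]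
      split_ifs <;> first | omega | ring1 | (exfalso; omega)
  have hx : (∑ z : p.Point, if z = x then p.sgn z else 0) = p.sgn x := by
    rw [Finset.sum_ite_eq' _ x p.sgn]; simp
  rw [hx] at hsum
  omega

lemma S_inv (p : TCP) (x : p.Point) :
    S p.invol (p.invol.pos (Sum.swap x)) = p.sgn x + S p (p.pos x) - p.tsum := by
  unfold S
  have hb : (∑ z : p.invol.Point,
        if p.invol.pos z < p.invol.pos (Sum.swap x) then p.invol.sgn z else 0)
      = ∑ z : p.Point,
        if p.invol.pos (Sum.swap z) < p.invol.pos (Sum.swap x)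
        then p.invol.sgn (Sum.swap z) else 0 :=
    (Fintype.sum_bijective _ (swap_bij p) _ _ (fun z => rfl)).symm
  rw [hb]
  have hstep : ∀ z : p.Point,
      (if p.invol.pos (Sum.swap z) < p.invol.pos (Sum.swap x)
        then p.invol.sgn (Sum.swap z) else 0)
      = - (if p.pos x < p.pos z then p.sgn z else 0) := by
    intro z
    have hz := pos_lt_size p z
    have hx := pos_lt_size p x
    rw [pos_inv, pos_inv, sgn_inv]
    have hc : (p.size - 1 - p.pos z < p.size - 1 - p.pos x) ↔ (p.pos x < p.pos z) := by omega
    split_ifs with h1 h2 h2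
    · rfl
    · exact absurd (hc.mp h1) h2
    · exact absurd (hc.mpr h2) h1
    · simp
  rw [Finset.sum_congr rfl (fun z _ => hstep z), Finset.sum_neg_distrib, upper_sum_eq]
  unfold S
  ring

lemma phi_inv (m : ℕ) (p : TCP) (x : p.Point) :
    phi m p.invol (Sum.swap x)
      = phi m p x + (if p.ncolor x then (m:ℤ) else -(m:ℤ)) - p.tsum := by
  unfold phi
  rw [S_inv, ncolor_inv]
  cases h : p.ncolor x <;> simp [off, TCP.sgn, h] <;> ring

lemma good_invol (m : ℕ) (p : TCP) (hp : Good m p) : Good m p.invol := by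
  obtain ⟨hp1, hp2, hp3⟩ := hp
  refine ⟨?_, ?_, ?_⟩
  · intro x y z hxy hxz
    obtain ⟨a, rfl⟩ := (swap_bij p).2 x
    obtain ⟨b, rfl⟩ := (swap_bij p).2 y
    obtain ⟨c, rfl⟩ := (swap_bij p).2 z
    replace hxy := (rel_inv p a b).mp hxy
    replace hxz := (rel_inv p a c).mp hxz
    exact (hp1 a b c hxy hxz).imp (congrArg _)
      (fun h => h.imp (congrArg _) (congrArg _))
  · rw [tsum_inv]
    exact dvd_neg.mpr hp2
  · intro x y hr hne
    obtain ⟨a, rfl⟩ := (swap_bij p).2 x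
    obtain ⟨b, rfl⟩ := (swap_bij p).2 y
    replace hr := (rel_inv p a b).mp hr
    have hab : a ≠ b := fun h => hne (by rw [h])
    have h3 := hp3 a b hr hab
    erw [phi_inv, phi_inv]
    have heq : phi m p a + (if p.ncolor a then (m:ℤ) else -(m:ℤ)) - p.tsum
        - (phi m p b + (if p.ncolor b then (m:ℤ) else -(m:ℤ)) - p.tsum) - m
        = (phi m p a - phi m p b - m)
          + ((if p.ncolor a then (m:ℤ) else -(m:ℤ))
            - (if p.ncolor b then (m:ℤ) else -(m:ℤ))) := by ring
    rw [heq]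
    apply dvd_add h3
    cases p.ncolor a <;> cases p.ncolor b <;>
      simp <;>
        first
          | exact ⟨0, by ring1⟩
          | exact ⟨1, by ring1⟩
          | exact ⟨-1, by ring1⟩
          | exact dvd_zero _

end TCPAux
namespace TCPAux
open TCP Finset Relation

section Walk
variable {V : Type*} {A : Type*} [AddCommGroup A]
variable (E₁ E₂ : V → V → Prop)

/-- one step of the alternating walk; the flag records the type of the next edge -/
def wstep : (V × Bool) → (V × Bool) → Prop :=
  fun s t => (if s.2 then E₁ s.1 t.1 else E₂ s.1 t.1) ∧ t.2 = !s.2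

variable {E₁ E₂}

lemma walk_parity {Φ : V → A} {c : A}
    (h1s : Symmetric E₁) (h2s : Symmetric E₂)
    (h1m : ∀ v w w', E₁ v w → E₁ v w' → w = w')
    (h2m : ∀ v w w', E₂ v w → E₂ v w' → w = w')
    (hΦ1 : ∀ v w, E₁ v w → Φ w = Φ v + c)
    (hΦ2 : ∀ v w, E₂ v w → Φ w = Φ v + c)
    (hc : c + c = 0)
    (x : V) (hx : ∀ w, ¬ E₂ x w) (y : V)
    (hxy : Relation.ReflTransGen (fun a b => E₁ a b ∨ E₂ a b) x y) :
    y = x ∨ (∃ w, E₂ y w) ∨ Φ y = Φ x + c := by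
  have inv : ∀ s : V × Bool, ReflTransGen (wstep E₁ E₂) (x, true) s →
      (Φ s.1 = Φ x + (if s.2 then 0 else c))
      ∧ ((s.1 = x ∧ s.2 = true) ∨ (∃ u, (if s.2 then E₂ u s.1 else E₁ u s.1)))
      ∧ (∀ u, (if s.2 then E₂ s.1 u else E₁ s.1 u) →
          (ReflTransGen (wstep E₁ E₂) (x, true) (u, true)
            ∨ ReflTransGen (wstep E₁ E₂) (x, true) (u, false))) := by
    intro s hs
    induction hs with
    | refl =>
      refine ⟨by simp, Or.inl ⟨rfl, rfl⟩, ?_⟩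
      intro u hu
      simp only [if_true] at hu
      exact absurd hu (hx u)
    | @tail b t hab hbc ih =>
      obtain ⟨he, hflip⟩ := hbc
      obtain ⟨ih1, _, ih3⟩ := ih
      have hΦstep : Φ t.1 = Φ b.1 + c := by
        by_cases hb : b.2 = true
        · rw [hb, if_pos rfl] at he
          exact hΦ1 _ _ he
        · rw [if_neg hb] at he
          exact hΦ2 _ _ he
      refine ⟨?_, ?_, ?_⟩
      · rw [hΦstep, ih1, hflip]
        by_cases hb : b.2 = true
        · rw [hb]; simp
        · have hb' : b.2 = false := by
            cases hbb : b.2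
            · rfl
            · exact absurd hbb hb
          rw [hb']
          simp [add_assoc, hc]
      · refine Or.inr ⟨b.1, ?_⟩
        rw [hflip]
        by_cases hb : b.2 = true
        · rw [hb, if_pos rfl] at he
          rw [hb]; simpa using he
        · have hb' : b.2 = false := by
            cases hbb : b.2
            · rfl
            · exact absurd hbb hb
          rw [hb', if_neg (by simp)] at he
          rw [hb']; simpa using he
      · intro u hu
        rw [hflip] at hu
        by_cases hb : b.2 = true
        · rw [hb, if_pos rfl] at he
          rw [hb] at hu
          simp only [Bool.not_true, if_neg (by simp : ¬ (false = true))] at hu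
          -- hu : E₁ t.1 u ; he : E₁ b.1 t.1
          have : u = b.1 := h1m t.1 u b.1 hu (h1s he)
          subst this
          have hb2 : ((b.1, true) : V × Bool) = b := by rw [← hb]
          exact Or.inl (by rw [hb2]; exact hab)
        · have hb' : b.2 = false := by
            cases hbb : b.2
            · rfl
            · exact absurd hbb hb
          rw [hb', if_neg (by simp)] at he
          rw [hb'] at hu
          simp only [Bool.not_false, if_pos rfl] at hu
          have : u = b.1 := h2m t.1 u b.1 hu (h2s he)
          subst this
          have hb2 : ((b.1, false) : V × Bool) = b := by rw [← hb']
          exact Or.inr (by rw [hb2]; exact hab)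
  have closure : ∀ v, (ReflTransGen (wstep E₁ E₂) (x, true) (v, true)
        ∨ ReflTransGen (wstep E₁ E₂) (x, true) (v, false)) →
      ∀ u, (E₁ v u ∨ E₂ v u) →
      (ReflTransGen (wstep E₁ E₂) (x, true) (u, true)
        ∨ ReflTransGen (wstep E₁ E₂) (x, true) (u, false)) := by
    intro v hv u hu
    rcases hv with h | h
    · rcases hu with h1 | h2
      · exact Or.inr (ReflTransGen.tail h ⟨by simpa using h1, rfl⟩)
      · exact (inv (v, true) h).2.2 u (by simpa using h2)
    · rcases hu with h1 | h2
      · exact (inv (v, false) h).2.2 u (by simpa using h1)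
      · exact Or.inl (ReflTransGen.tail h ⟨by simpa using h2, by simp⟩)
  have reach : ∀ v, ReflTransGen (fun a b => E₁ a b ∨ E₂ a b) x v →
      (ReflTransGen (wstep E₁ E₂) (x, true) (v, true)
        ∨ ReflTransGen (wstep E₁ E₂) (x, true) (v, false)) := by
    intro v hv
    induction hv with
    | refl => exact Or.inl ReflTransGen.refl
    | tail hab hbc ih => exact closure _ ih _ hbc
  rcases reach y hxy with h | h
  · rcases (inv (y, true) h).2.1 with ⟨h1, _⟩ | ⟨u, hu⟩
    · exact Or.inl h1
    · simp only [if_pos rfl] at hu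
      exact Or.inr (Or.inl ⟨u, h2s hu⟩)
  · have := (inv (y, false) h).1
    simp only [if_neg (by simp : ¬ (false = true))] at this
    exact Or.inr (Or.inr this)

end Walk
end TCPAux
namespace TCPAux
open TCP Finset Relation

section Comp
variable (p q : TCP)

/-- block edges of the composition graph -/
def CE1 : (q.Point ⊕ p.Point) → (q.Point ⊕ p.Point) → Prop := fun v w =>
  (∃ a b, v = .inl a ∧ w = .inl b ∧ q.rel.r a b ∧ a ≠ b) ∨
  (∃ a b, v = .inr a ∧ w = .inr b ∧ p.rel.r a b ∧ a ≠ b)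

/-- middle edges of the composition graph -/
def CE2 (h : p.upper = q.lower) : (q.Point ⊕ p.Point) → (q.Point ⊕ p.Point) → Prop :=
  fun v w =>
    (∃ j : Fin p.upper, v = .inl (.inr (Fin.cast h j)) ∧ w = .inr (.inl j)) ∨
    (∃ j : Fin p.upper, w = .inl (.inr (Fin.cast h j)) ∧ v = .inr (.inl j))

lemma CE1_symm : Symmetric (CE1 p q) := by
  rintro v w (⟨a, b, rfl, rfl, hr, hne⟩ | ⟨a, b, rfl, rfl, hr, hne⟩)
  · exact Or.inl ⟨b, a, rfl, rfl, q.rel.symm hr, hne.symm⟩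
  · exact Or.inr ⟨b, a, rfl, rfl, p.rel.symm hr, hne.symm⟩

lemma CE2_symm (h : p.upper = q.lower) : Symmetric (CE2 p q h) := by
  rintro v w (h1 | h1)
  · exact Or.inr h1
  · exact Or.inl h1

lemma CE1_match
    (hp1 : ∀ x y z : p.Point, p.rel.r x y → p.rel.r x z → x = y ∨ x = z ∨ y = z)
    (hq1 : ∀ x y z : q.Point, q.rel.r x y → q.rel.r x z → x = y ∨ x = z ∨ y = z) :
    ∀ v w w', CE1 p q v w → CE1 p q v w' → w = w' := by
  rintro v w w' (⟨a, b, rfl, rfl, hr, hne⟩ | ⟨a, b, rfl, rfl, hr, hne⟩)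
    (⟨a', b', he, rfl, hr', hne'⟩ | ⟨a', b', he, rfl, hr', hne'⟩)
  · obtain rfl : a = a' := Sum.inl.inj he
    rcases hq1 a b b' hr hr' with h | h | h
    · exact absurd h hne
    · exact absurd h hne'
    · exact congrArg _ h
  · exact absurd he (by simp)
  · exact absurd he (by simp)
  · obtain rfl : a = a' := Sum.inr.inj he
    rcases hp1 a b b' hr hr' with h | h | h
    · exact absurd h hne
    · exact absurd h hne'
    · exact congrArg _ h

lemma CE2_match (h : p.upper = q.lower) :
    ∀ v w w', CE2 p q h v w → CE2 p q h v w' → w = w' := by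
  rintro v w w' (⟨j, rfl, rfl⟩ | ⟨j, rfl, rfl⟩) (⟨j', he, rfl⟩ | ⟨j', rfl, he⟩)
  · obtain hj : Fin.cast h j = Fin.cast h j' := Sum.inr.inj (Sum.inl.inj he)
    have hv := congrArg Fin.val hj
    have hjj : j = j' := Fin.ext (by exact hv)
    rw [hjj]
  · exact absurd he (by simp)
  · exact absurd he.symm (by simp)
  · obtain hj : j = j' := Sum.inl.inj (Sum.inr.inj he)
    rw [hj]

/-- embedding of the points of the composition into the composition graph -/
def cf (h : Composable p q) : (p.comp q h).Point → (q.Point ⊕ p.Point) := fun x =>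
  match x with
  | .inl j => .inl (.inl j)
  | .inr i => .inr (.inr i)

lemma rel_comp (h : Composable p q) (x y : (p.comp q h).Point) :
    (p.comp q h).rel.r x y
      ↔ EqvGen (TCP.compRel p q h.len) (cf p q h x) (cf p q h y) := by
  rcases x with j | i <;> rcases y with j' | i' <;> exact Iff.rfl

lemma cf_inj (h : Composable p q) : Function.Injective (cf p q h) := by
  rintro (a | a) (b | b) he <;> simp [cf] at he <;>
    first | exact congrArg _ (by exact he) | exact congrArg _ (Sum.inl.inj he) | exact congrArg _ (Sum.inr.inj he) | skip

lemma no_ce2 (h : Composable p q) (x : (p.comp q h).Point) (w : q.Point ⊕ p.Point) :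
    ¬ CE2 p q h.len (cf p q h x) w := by
  rcases x with j | i <;> rintro (⟨k, hk, -⟩ | ⟨k, -, hk⟩) <;> simp [cf] at hk

lemma eqvgen_rtg (h : p.upper = q.lower) (v w : q.Point ⊕ p.Point)
    (hvw : EqvGen (TCP.compRel p q h) v w) :
    ReflTransGen (fun a b => CE1 p q a b ∨ CE2 p q h a b) v w := by
  have hsym : Symmetric (fun a b => CE1 p q a b ∨ CE2 p q h a b) := by
    rintro a b (h1 | h2)
    · exact Or.inl (CE1_symm p q h1)
    · exact Or.inr (CE2_symm p q h h2)
  induction hvw with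
  | rel a b hab =>
    rcases hab with ⟨a', b', rfl, rfl, hr⟩ | ⟨a', b', rfl, rfl, hr⟩ | ⟨j, rfl, rfl⟩
      | ⟨j, h1, h2⟩
    · by_cases he : a' = b'
      · rw [he]
      · exact ReflTransGen.single (Or.inl (Or.inl ⟨a', b', rfl, rfl, hr, he⟩))
    · by_cases he : a' = b'
      · rw [he]
      · exact ReflTransGen.single (Or.inl (Or.inr ⟨a', b', rfl, rfl, hr, he⟩))
    · exact ReflTransGen.single (Or.inr (Or.inl ⟨j, rfl, rfl⟩))
    · subst h1; subst h2
      exact ReflTransGen.single (Or.inr (Or.inr ⟨j, rfl, rfl⟩))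
  | refl => exact ReflTransGen.refl
  | symm a b hab ih => exact @Std.Symm.symm _ _ (@ReflTransGen.stdSymm _ _ ⟨fun _ _ h => hsym h⟩) _ _ ih
  | trans a b c h1 h2 ih1 ih2 => exact ih1.trans ih2

/-- expansion of the prefix sum of a partition -/
lemma S_eq (r : TCP) (K : ℕ) :
    S r K = (∑ j : Fin r.upper,
        if r.lower + (r.upper - 1 - (j:ℕ)) < K then r.sgn (.inl j) else 0)
      + (∑ i : Fin r.lower, if (i:ℕ) < K then r.sgn (.inr i) else 0) := by
  unfold S
  rw [Fintype.sum_sum_type]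
  congr 1

lemma S_comp_eq (hcp : Composable p q) (K : ℕ) :
    S (p.comp q hcp) K = (∑ j : Fin q.upper,
        if p.lower + (q.upper - 1 - (j:ℕ)) < K then q.sgn (.inl j) else 0)
      + (∑ i : Fin p.lower, if (i:ℕ) < K then p.sgn (.inr i) else 0) :=
  S_eq (p.comp q hcp) K

lemma sgnq_mid (hcp : Composable p q) (j : Fin p.upper) :
    q.sgn (.inr (Fin.cast hcp.len j)) = - p.sgn (.inl j) := by
  show (if q.ncolor (.inr (Fin.cast hcp.len j)) then (1:ℤ) else -1)
    = - (if p.ncolor (.inl j) then (1:ℤ) else -1)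
  have h1 : q.ncolor (.inr (Fin.cast hcp.len j)) = q.loColor (Fin.cast hcp.len j) := rfl
  have h2 : p.ncolor (.inl j) = !(p.upColor j) := rfl
  rw [h1, h2, ← hcp.col j]
  cases p.upColor j <;> simp

lemma lsum_mid (hcp : Composable p q) : Lsum q = - Usum p := by
  unfold Lsum Usum
  rw [← Finset.sum_neg_distrib]
  exact (Fintype.sum_equiv (finCongr hcp.len) (fun j : Fin p.upper => - p.sgn (.inl j))
    (fun i : Fin q.lower => q.sgn (.inr i))
    (fun j => by
      try rw [finCongr_apply]
      rw [sgnq_mid p q hcp j])).symm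

lemma tsum_comp (hcp : Composable p q) : (p.comp q hcp).tsum = p.tsum + q.tsum := by
  have h1 : (p.comp q hcp).tsum = Usum q + Lsum p := by
    rw [tsum_eq, Fintype.sum_sum_type]
    rfl
  have h2 := tsum_split p
  have h3 := tsum_split q
  have h4 := lsum_mid p q hcp
  omega

lemma usum_split (r : TCP) (j : Fin r.upper) :
    Usum r = (∑ j' : Fin r.upper, if (j':ℕ) < (j:ℕ) then r.sgn (.inl j') else 0)
      + r.sgn (.inl j)
      + (∑ j' : Fin r.upper, if (j:ℕ) < (j':ℕ) then r.sgn (.inl j') else 0) := by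
  unfold Usum
  rw [show r.sgn (.inl j) = ∑ j' : Fin r.upper, if j' = j then r.sgn (.inl j') else 0 from by
    rw [Finset.sum_ite_eq' _ j _]; simp]
  rw [← Finset.sum_add_distrib, ← Finset.sum_add_distrib]
  apply Finset.sum_congr rfl
  intro j' _
  by_cases hj : j' = j
  · subst hj; simp
  · have hne : (j':ℕ) ≠ (j:ℕ) := fun hh => hj (Fin.ext hh)
    simp only [if_neg hj]
    split_ifs <;> first | omega | ring1 | (exfalso; omega)

lemma phi_mid (hcp : Composable p q) (m : ℕ) (htp : (2*(m:ℤ)) ∣ p.tsum) (j : Fin p.upper) :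
    (2*(m:ℤ)) ∣ (phi m q (.inr (Fin.cast hcp.len j)) - phi m p (.inl j) - m) := by
  unfold phi
  have hKq : q.pos (.inr (Fin.cast hcp.len j)) = (j:ℕ) := rfl
  have hKp : p.pos (.inl j) = p.lower + (p.upper - 1 - (j:ℕ)) := rfl
  have hj := j.isLt
  rw [hKq, hKp, S_eq, S_eq]
  -- q upper sum vanishes
  have hq1 : (∑ j' : Fin q.upper,
      if q.lower + (q.upper - 1 - (j':ℕ)) < (j:ℕ) then q.sgn (.inl j') else 0) = 0 := by
    apply Finset.sum_eq_zero
    intro j' _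
    have : (j:ℕ) < q.lower := by rw [← hcp.len]; exact hj
    rw [if_neg (by omega)]
  -- q lower sum is minus a p-sum
  have hq2 : (∑ i : Fin q.lower, if (i:ℕ) < (j:ℕ) then q.sgn (.inr i) else 0)
      = - ∑ j' : Fin p.upper, (if (j':ℕ) < (j:ℕ) then p.sgn (.inl j') else 0) := by
    rw [← Finset.sum_neg_distrib]
    exact (Fintype.sum_equiv (finCongr hcp.len)
      (fun j' : Fin p.upper => - (if (j':ℕ) < (j:ℕ) then p.sgn (.inl j') else 0))
      (fun i : Fin q.lower => if (i:ℕ) < (j:ℕ) then q.sgn (.inr i) else 0)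
      (fun j' => by
        try rw [finCongr_apply]
        have hv : ((Fin.cast hcp.len j' : Fin q.lower) : ℕ) = (j' : ℕ) := rfl
        rw [hv]
        split_ifs
        · rw [sgnq_mid p q hcp j']
        · simp)).symm
  -- p upper sum at p.pos (inl j)
  have hp1 : (∑ j' : Fin p.upper,
      if p.lower + (p.upper - 1 - (j':ℕ)) < p.lower + (p.upper - 1 - (j:ℕ))
      then p.sgn (.inl j') else 0)
      = ∑ j' : Fin p.upper, if (j:ℕ) < (j':ℕ) then p.sgn (.inl j') else 0 := by
    apply Finset.sum_congr rfl
    intro j' _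
    have := j'.isLt
    exact if_congr (by omega) rfl rfl
  -- p lower sum is all of Lsum p
  have hp2 : (∑ i : Fin p.lower,
      if (i:ℕ) < p.lower + (p.upper - 1 - (j:ℕ)) then p.sgn (.inr i) else 0) = Lsum p := by
    unfold Lsum
    apply Finset.sum_congr rfl
    intro i _
    have := i.isLt
    rw [if_pos (by omega)]
  rw [hq1, hq2, hp1, hp2]
  have hsplit := usum_split p j
  have hts := tsum_split p
  have hnq : q.ncolor (.inr (Fin.cast hcp.len j)) = p.upColor j := by
    show q.loColor (Fin.cast hcp.len j) = p.upColor j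
    rw [← hcp.col j]
  have hnp : p.ncolor (.inl j) = !(p.upColor j) := rfl
  have off_t : off m true = 0 := rfl
  have off_f : off m false = (m:ℤ) - 1 := rfl
  obtain ⟨k, hk⟩ := htp
  rw [hnq, hnp]
  cases hcol : p.upColor j
  · have hsgn : p.sgn (.inl j) = 1 := by
      show (if p.ncolor (.inl j) then (1:ℤ) else -1) = 1
      rw [hnp, hcol]; rfl
    rw [hsgn] at hsplit
    rw [Bool.not_false, off_t, off_f]
    exact ⟨-k, by linear_combination -hk + hts + hsplit⟩
  · have hsgn : p.sgn (.inl j) = -1 := by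
      show (if p.ncolor (.inl j) then (1:ℤ) else -1) = -1
      rw [hnp, hcol]; rfl
    rw [hsgn] at hsplit
    rw [Bool.not_true, off_t, off_f]
    exact ⟨-k - 1, by linear_combination -hk + hts + hsplit⟩

end Comp
end TCPAux
namespace TCPAux
open TCP Finset Relation

lemma zmod_step (m : ℕ) {a b : ℤ} (h : (2*(m:ℤ)) ∣ (a - b - m)) :
    ((b : ZMod (2*m))) = ((a : ZMod (2*m))) + (m : ZMod (2*m)) := by
  have h' := (dvd_iff_zmod m _).mp h
  push_cast at h'
  have hm2 : ((m : ZMod (2*m))) + m = 0 := by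
    rw [← Nat.cast_add, show m + m = 2*m from by ring, ZMod.natCast_self]
  linear_combination (-1 : ZMod (2*m)) * h' - hm2

section Comp2
variable (p q : TCP) (hcp : TCP.Composable p q)

lemma phi_comp_low (m : ℕ) (i : Fin p.lower) :
    phi m (p.comp q hcp) (.inr i) = phi m p (.inr i) := by
  unfold phi
  have hK : (p.comp q hcp).pos (.inr i) = (i:ℕ) := rfl
  have hK2 : p.pos (.inr i) = (i:ℕ) := rfl
  have hnc : (p.comp q hcp).ncolor (.inr i) = p.ncolor (.inr i) := rfl
  rw [hK, hK2, hnc, S_comp_eq p q hcp, S_eq]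
  have hi : (i:ℕ) < p.lower := i.isLt
  have h1 : (∑ j : Fin q.upper,
      if p.lower + (q.upper - 1 - (j:ℕ)) < (i:ℕ) then q.sgn (.inl j) else 0) = 0 := by
    apply Finset.sum_eq_zero; intro j _; rw [if_neg (by omega)]
  have h2 : (∑ j : Fin p.upper,
      if p.lower + (p.upper - 1 - (j:ℕ)) < (i:ℕ) then p.sgn (.inl j) else 0) = 0 := by
    apply Finset.sum_eq_zero; intro j _; rw [if_neg (by omega)]
  rw [h1, h2]

lemma phi_comp_up (m : ℕ) (j : Fin q.upper) :
    phi m (p.comp q hcp) (.inl j) = phi m q (.inl j) + p.tsum := by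
  unfold phi
  have hj := j.isLt
  have hK : (p.comp q hcp).pos (.inl j) = p.lower + (q.upper - 1 - (j:ℕ)) := rfl
  have hKq : q.pos (.inl j) = q.lower + (q.upper - 1 - (j:ℕ)) := rfl
  have hnc : (p.comp q hcp).ncolor (.inl j) = q.ncolor (.inl j) := rfl
  rw [hK, hKq, hnc, S_comp_eq p q hcp, S_eq]
  have e1 : (∑ j' : Fin q.upper,
      if p.lower + (q.upper - 1 - (j':ℕ)) < p.lower + (q.upper - 1 - (j:ℕ))
      then q.sgn (.inl j') else 0)
      = ∑ j' : Fin q.upper,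
      if q.lower + (q.upper - 1 - (j':ℕ)) < q.lower + (q.upper - 1 - (j:ℕ))
      then q.sgn (.inl j') else 0 := by
    apply Finset.sum_congr rfl; intro j' _
    have := j'.isLt
    exact if_congr (by omega) rfl rfl
  have e2 : (∑ i : Fin p.lower,
      if (i:ℕ) < p.lower + (q.upper - 1 - (j:ℕ)) then p.sgn (.inr i) else 0) = Lsum p := by
    unfold Lsum
    apply Finset.sum_congr rfl; intro i _
    have := i.isLt
    rw [if_pos (by omega)]
  have e3 : (∑ i : Fin q.lower,
      if (i:ℕ) < q.lower + (q.upper - 1 - (j:ℕ)) then q.sgn (.inr i) else 0) = Lsum q := by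
    unfold Lsum
    apply Finset.sum_congr rfl; intro i _
    have := i.isLt
    rw [if_pos (by omega)]
  rw [e1, e2, e3]
  have h4 := lsum_mid p q hcp
  have h5 := tsum_split p
  omega

/-- the potential on the composition graph, with values in `ZMod (2m)` -/
def Phib (m : ℕ) : (q.Point ⊕ p.Point) → ZMod (2*m) :=
  fun v => ((Sum.elim (phi m q) (phi m p) v : ℤ) : ZMod (2*m))

lemma good_comp (m : ℕ) (hm : 0 < m) (hp : Good m p) (hq : Good m q) :
    Good m (p.comp q hcp) := by
  obtain ⟨hp1, hp2, hp3⟩ := hp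
  obtain ⟨hq1, hq2, hq3⟩ := hq
  haveI : NeZero (2*m) := ⟨by omega⟩
  have hm2 : ((m : ZMod (2*m))) + m = 0 := by
    rw [← Nat.cast_add, show m + m = 2*m from by ring, ZMod.natCast_self]
  have hmne : ((m : ZMod (2*m))) ≠ 0 := by
    intro h0
    have hd := (ZMod.natCast_eq_zero_iff m (2*m)).mp h0
    have := Nat.le_of_dvd (by omega) hd
    omega
  have hΦ1 : ∀ v w, CE1 p q v w → Phib p q m w = Phib p q m v + (m : ZMod (2*m)) := by
    rintro v w (⟨a, b, rfl, rfl, hr, hne⟩ | ⟨a, b, rfl, rfl, hr, hne⟩)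
    · exact zmod_step m (hq3 a b hr hne)
    · exact zmod_step m (hp3 a b hr hne)
  have hΦ2 : ∀ v w, CE2 p q hcp.len v w → Phib p q m w = Phib p q m v + (m : ZMod (2*m)) := by
    rintro v w (⟨j, rfl, rfl⟩ | ⟨j, rfl, rfl⟩)
    · exact zmod_step m (phi_mid p q hcp m hp2 j)
    · have h1 := zmod_step m (phi_mid p q hcp m hp2 j)
      show Phib p q m (.inl (.inr (Fin.cast hcp.len j))) = _
      rw [show Phib p q m (.inr (.inl j)) = Phib p q m (.inl (.inr (Fin.cast hcp.len j)))
          + (m : ZMod (2*m)) from h1]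
      rw [add_assoc, hm2, add_zero]
  have key : ∀ x y : (p.comp q hcp).Point, (p.comp q hcp).rel.r x y → x ≠ y →
      Phib p q m (cf p q hcp y) = Phib p q m (cf p q hcp x) + (m : ZMod (2*m)) := by
    intro x y hr hne
    have hrt := eqvgen_rtg p q hcp.len _ _ ((rel_comp p q hcp x y).mp hr)
    have hres := walk_parity (CE1_symm p q) (CE2_symm p q hcp.len)
      (CE1_match p q hp1 hq1) (CE2_match p q hcp.len)
      hΦ1 hΦ2 hm2 (cf p q hcp x) (no_ce2 p q hcp x) (cf p q hcp y) hrt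
    rcases hres with h | h | h
    · exact absurd (cf_inj p q hcp h) (Ne.symm hne)
    · obtain ⟨w, hw⟩ := h
      exact absurd hw (no_ce2 p q hcp y w)
    · exact h
  refine ⟨?_, ?_, ?_⟩
  · intro x y z hxy hxz
    by_contra hcon
    push_neg at hcon
    obtain ⟨hne1, hne2, hne3⟩ := hcon
    have hyz : (p.comp q hcp).rel.r y z :=
      (p.comp q hcp).rel.trans ((p.comp q hcp).rel.symm hxy) hxz
    have k1 := key x y hxy hne1
    have k2 := key x z hxz hne2
    have k3 := key y z hyz hne3
    rw [k1, k2] at k3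
    exact hmne (by linear_combination -k3)
  · rw [tsum_comp p q hcp]
    exact dvd_add hp2 hq2
  · intro x y hr hne
    have hk := key x y hr hne
    have hbridge : ∀ x : (p.comp q hcp).Point, ∃ t : ℤ, (2*(m:ℤ)) ∣ t ∧
        phi m (p.comp q hcp) x
          = Sum.elim (phi m q) (phi m p) (cf p q hcp x) + t := by
      rintro (j | i)
      · exact ⟨p.tsum, hp2, by rw [phi_comp_up p q hcp m j]; rfl⟩
      · refine ⟨0, dvd_zero _, ?_⟩
        rw [phi_comp_low p q hcp m i]
        show phi m p (.inr i) = phi m p (.inr i) + 0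
        ring
    obtain ⟨t1, ht1, he1⟩ := hbridge x
    obtain ⟨t2, ht2, he2⟩ := hbridge y
    rw [dvd_iff_zmod, he1, he2]
    push_cast
    have hc1 : ((t1 : ZMod (2*m))) = 0 := (dvd_iff_zmod m t1).mp ht1
    have hc2 : ((t2 : ZMod (2*m))) = 0 := (dvd_iff_zmod m t2).mp ht2
    have hk2 : ((Sum.elim (phi m q) (phi m p) (cf p q hcp y) : ℤ) : ZMod (2*m))
        = ((Sum.elim (phi m q) (phi m p) (cf p q hcp x) : ℤ) : ZMod (2*m))
          + (m : ZMod (2*m)) := hk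
    linear_combination hc1 - hc2 - hk2 - hm2

end Comp2
end TCPAux

/-- for m ≥ 1, the partitions with blocks of at most two legs, total
color sum in 2mℤ, and same-block distances odd/even multiples of m according to the
normalized colors, form a category. -/
theorem stmt15 (m : ℕ) (hm : 0 < m) :
    TCP.IsCategory {p : TCP |
      (∀ B : Finset p.Point, p.IsBlock B → B.card ≤ 2) ∧
      ((2 * m : ℤ) ∣ p.tsum) ∧
      (∀ B : Finset p.Point, p.IsBlock B → ∀ a ∈ B, ∀ b ∈ B, a ≠ b →
        ((p.ncolor a = p.ncolor b → (2 * m : ℤ) ∣ (p.cdist a b - m)) ∧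
         (p.ncolor a ≠ p.ncolor b → (2 * m : ℤ) ∣ p.cdist a b)))} := by
  refine ⟨?_, ?_, ?_, ?_, ?_, ?_, ?_, ?_⟩
  · exact (TCPAux.good_iff m _).mpr (TCPAux.good_empty m)
  · exact (TCPAux.good_iff m _).mpr (TCPAux.good_idPart m true)
  · exact (TCPAux.good_iff m _).mpr (TCPAux.good_idPart m false)
  · have h := TCPAux.good_lpair m true
    simp only [Bool.not_true] at h
    exact (TCPAux.good_iff m _).mpr h
  · have h := TCPAux.good_lpair m false
    simp only [Bool.not_false] at h
    exact (TCPAux.good_iff m _).mpr h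
  · intro p q hp hq
    exact (TCPAux.good_iff m _).mpr
      (TCPAux.good_tensor m p q ((TCPAux.good_iff m p).mp hp) ((TCPAux.good_iff m q).mp hq))
  · intro p hp
    exact (TCPAux.good_iff m _).mpr (TCPAux.good_invol m p ((TCPAux.good_iff m p).mp hp))
  · intro p q h hp hq
    exact (TCPAux.good_iff m _).mpr
      (TCPAux.good_comp p q h m hm ((TCPAux.good_iff m p).mp hp) ((TCPAux.good_iff m q).mp hq))
end
end

section
/- For every g ∈ {0} ∪ ℕ, the set { p ∈ P°• | every block of p has color sum in gℤ } is a category of two-colored partitions. -/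
noncomputable section
attribute [local instance] Classical.propDecidable

/-! ### Auxiliary lemmas for stmt17 -/

open Finset in
private lemma dvd_sum_saturated {α : Type*} [Fintype α] (r : Setoid α) (f : α → ℤ) (g : ℤ)
    (hblock : ∀ x : α, g ∣ ∑ y ∈ univ.filter (fun y => r.r x y), f y) :
    ∀ S : Finset α, (∀ x ∈ S, ∀ y, r.r x y → y ∈ S) → g ∣ ∑ x ∈ S, f x := by
  intro S
  induction S using Finset.strongInduction with
  | _ S ih =>
    intro hsat
    rcases S.eq_empty_or_nonempty with rfl | ⟨x, hx⟩
    · simp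
    · set B := univ.filter (fun y => r.r x y) with hB
      have hBS : B ⊆ S := fun y hy => hsat x hx y (by simpa [hB] using hy)
      have hxB : x ∈ B := by simp [hB]
      have hss : S \ B ⊂ S := Finset.sdiff_ssubset hBS ⟨x, hxB⟩
      have hsat' : ∀ a ∈ S \ B, ∀ y, r.r a y → y ∈ S \ B := by
        intro a ha y hay
        rw [Finset.mem_sdiff] at ha ⊢
        refine ⟨hsat a ha.1 y hay, fun hyB => ha.2 ?_⟩
        simp only [hB, mem_filter, mem_univ, true_and] at hyB ⊢
        exact r.trans hyB (r.symm hay)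
      have hrec := ih _ hss hsat'
      have hsplit : ∑ a ∈ S, f a = ∑ a ∈ B, f a + ∑ a ∈ S \ B, f a := by
        rw [← Finset.sum_union Finset.disjoint_sdiff]
        congr 1
        rw [Finset.union_sdiff_of_subset hBS]
      rw [hsplit]
      exact dvd_add (hblock x) hrec

private lemma csum_blockOf_eq (p : TCP) (x : p.Point) :
    p.csum (p.blockOf x) = ∑ y ∈ Finset.univ.filter (fun y => p.rel.r x y), p.sgn y := rfl

private lemma top_rel {α : Type*} (a b : α) : (⊤ : Setoid α).r a b := by
  rw [show ((⊤ : Setoid α)).r = ⇑(⊤ : Setoid α) from rfl, Setoid.top_def]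
  trivial

/-- The point inclusion used in `TCP.comp`. -/
private def compι (p q : TCP) : (Fin q.upper ⊕ Fin p.lower) → (q.Point ⊕ p.Point)
  | .inl j => Sum.inl (Sum.inl j)
  | .inr i => Sum.inr (Sum.inr i)

/-- The point identification for a tensor product, as an equivalence. -/
private def ptEquiv (p q : TCP) : (p.tensor q).Point ≃ (p.Point ⊕ q.Point) :=
  (Equiv.sumCongr finSumFinEquiv.symm finSumFinEquiv.symm).trans
    (Equiv.sumSumSumComm _ _ _ _)

private lemma ptEquiv_eq (p q : TCP) (y : (p.tensor q).Point) :
    ptEquiv p q y = TCP.ptmap p q y := by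
  rcases y with j | i
  · rcases h : finSumFinEquiv.symm j with a | a <;>
      · simp only [ptEquiv, Equiv.trans_apply, Equiv.sumCongr, Equiv.coe_fn_mk,
          Sum.map_inl, Sum.map_inr, h, TCP.ptmap, Sum.elim_inl, Sum.elim_inr]
        exact congrArg (fun t => (Equiv.sumSumSumComm (Fin p.upper) (Fin q.upper) (Fin p.lower) (Fin q.lower)) (Sum.inl t)) h
  · rcases h : finSumFinEquiv.symm i with a | a <;>
      · simp only [ptEquiv, Equiv.trans_apply, Equiv.sumCongr, Equiv.coe_fn_mk,
          Sum.map_inl, Sum.map_inr, h, TCP.ptmap, Sum.elim_inl, Sum.elim_inr]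
        exact congrArg (fun t => (Equiv.sumSumSumComm (Fin p.upper) (Fin q.upper) (Fin p.lower) (Fin q.lower)) (Sum.inr t)) h

private lemma sgn_tensor (p q : TCP) (y : (p.tensor q).Point) :
    (p.tensor q).sgn y = Sum.elim p.sgn q.sgn (TCP.ptmap p q y) := by
  rcases y with j | i
  · rcases h : finSumFinEquiv.symm j with a | a <;>
      simp [TCP.sgn, TCP.ncolor, TCP.tensor, TCP.ptmap, h]
  · rcases h : finSumFinEquiv.symm i with a | a <;>
      simp [TCP.sgn, TCP.ncolor, TCP.tensor, TCP.ptmap, h] <;> rfl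

/-- partitions all of whose blocks have color sum in gℤ form a category. -/
theorem stmt17 (g : ℕ) :
    TCP.IsCategory {p : TCP | ∀ B : Finset p.Point, p.IsBlock B →
      (g : ℤ) ∣ p.csum B} := by
  have hid : ∀ c : Bool, TCP.idPart c ∈ {p : TCP | ∀ B : Finset p.Point, p.IsBlock B →
      (g : ℤ) ∣ p.csum B} := by
    intro c B hB
    obtain ⟨x, rfl⟩ := hB
    have hbl : (TCP.idPart c).blockOf x = Finset.univ := by
      ext y
      simp only [TCP.blockOf, Finset.mem_filter, Finset.mem_univ, true_and]
      exact iff_true_intro (top_rel x y)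
    rw [hbl]
    have h0 : (TCP.idPart c).csum Finset.univ = 0 := by
      simp [TCP.csum, TCP.sgn, TCP.ncolor, Fintype.sum_sum_type, TCP.idPart]
      cases c <;> decide
    rw [h0]
    exact dvd_zero _
  have hpair : ∀ c : Bool, TCP.lpair c (!c) ∈ {p : TCP | ∀ B : Finset p.Point, p.IsBlock B →
      (g : ℤ) ∣ p.csum B} := by
    intro c B hB
    obtain ⟨x, rfl⟩ := hB
    have hbl : (TCP.lpair c (!c)).blockOf x = Finset.univ := by
      ext y
      simp only [TCP.blockOf, Finset.mem_filter, Finset.mem_univ, true_and]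
      exact iff_true_intro (top_rel x y)
    rw [hbl]
    have h0 : (TCP.lpair c (!c)).csum Finset.univ = 0 := by
      simp [TCP.csum, TCP.sgn, TCP.ncolor, Fintype.sum_sum_type, TCP.lpair,
        Fin.sum_univ_two]
      cases c <;> decide
    rw [h0]
    exact dvd_zero _
  refine ⟨?_, ?_, ?_, ?_, ?_, ?_, ?_, ?_⟩
  · -- empty partition
    intro B hB
    obtain ⟨x, rfl⟩ := hB
    rcases x with j | i
    · exact j.elim0
    · exact i.elim0
  · exact hid true
  · exact hid false
  · simpa using hpair true
  · simpa using hpair false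
  · -- tensor
    intro p q hp hq B hB
    obtain ⟨x, rfl⟩ := hB
    have key : (p.tensor q).csum ((p.tensor q).blockOf x)
        = Sum.elim (fun u => p.csum (p.blockOf u)) (fun u => q.csum (q.blockOf u))
            (TCP.ptmap p q x) := by
      rw [csum_blockOf_eq]
      have h1 : ∑ y ∈ Finset.univ.filter (fun y => (p.tensor q).rel.r x y),
          (p.tensor q).sgn y
          = ∑ z ∈ Finset.univ.filter
              (fun z => TCP.sumRel p.rel.r q.rel.r (TCP.ptmap p q x) z),
              Sum.elim p.sgn q.sgn z := by
        refine Finset.sum_equiv (ptEquiv p q) ?_ ?_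
        · intro y
          simp only [Finset.mem_filter, Finset.mem_univ, true_and, ptEquiv_eq]
          exact Iff.rfl
        · intro y _
          rw [ptEquiv_eq, sgn_tensor]
      rw [h1]
      rcases hx : TCP.ptmap p q x with u | u
      · rw [Finset.sum_filter, Fintype.sum_sum_type]
        simp only [TCP.sumRel, Sum.elim_inl, Sum.elim_inr]
        rw [csum_blockOf_eq, Finset.sum_filter]
        simp
        rfl
      · rw [Finset.sum_filter, Fintype.sum_sum_type]
        simp only [TCP.sumRel, Sum.elim_inl, Sum.elim_inr]
        rw [csum_blockOf_eq, Finset.sum_filter]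
        simp
        rfl
    rw [key]
    rcases TCP.ptmap p q x with u | u
    · exact hp _ ⟨u, rfl⟩
    · exact hq _ ⟨u, rfl⟩
  · -- involution
    intro p hp B hB
    obtain ⟨x, rfl⟩ := hB
    have hsgn : ∀ y : p.invol.Point, p.invol.sgn y = - p.sgn y.swap := by
      rintro (j | i)
      · show (if (!p.loColor j) = true then (1:ℤ) else -1) = -(if p.loColor j = true then 1 else -1)
        by_cases hb : p.loColor j = true <;> simp [hb]
      · show (if p.upColor i = true then (1:ℤ) else -1) = -(if (!p.upColor i) = true then 1 else -1)
        by_cases hb : p.upColor i = true <;> simp [hb]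
    have key : p.invol.csum (p.invol.blockOf x) = - p.csum (p.blockOf x.swap) := by
      rw [csum_blockOf_eq, csum_blockOf_eq p x.swap, ← Finset.sum_neg_distrib]
      refine Finset.sum_equiv (Equiv.sumComm _ _) ?_ ?_
      · intro y
        simp only [Finset.mem_filter, Finset.mem_univ, true_and]
        exact Iff.rfl
      · intro y _
        rw [hsgn]
        rfl
    rw [key]
    exact Dvd.dvd.neg_right (hp _ ⟨x.swap, rfl⟩)
  · -- composition
    intro p q h hp hq B hB
    obtain ⟨x, rfl⟩ := hB
    set R := TCP.compRel p q h.len with hR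
    set E : (q.Point ⊕ p.Point) → Prop :=
      fun z => Relation.EqvGen R (compι p q x) z with hE
    set Tq : Finset q.Point := Finset.univ.filter (fun z => E (.inl z)) with hTq
    set Tp : Finset p.Point := Finset.univ.filter (fun z => E (.inr z)) with hTp
    -- middle cancellation
    have hmid : ∑ j : Fin p.upper, (if E (.inr (.inl j)) then p.sgn (.inl j) else 0)
        = ∑ i : Fin q.lower, (if E (.inl (.inr i)) then - q.sgn (.inr i) else 0) := by
      refine Finset.sum_equiv (finCongr h.len) (by simp) ?_
      intro j _
      have hEiff : E (.inr (.inl j)) ↔ E (.inl (.inr (Fin.cast h.len j))) := by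
        have hRj : R (Sum.inl (Sum.inr (Fin.cast h.len j)))
            (Sum.inr (Sum.inl j)) := Or.inr (Or.inr (Or.inl ⟨j, rfl, rfl⟩))
        constructor
        · intro hh
          exact Relation.EqvGen.trans _ _ _ hh
            (Relation.EqvGen.symm _ _ (Relation.EqvGen.rel _ _ hRj))
        · intro hh
          exact Relation.EqvGen.trans _ _ _ hh (Relation.EqvGen.rel _ _ hRj)
      have hsgnj : p.sgn (.inl j) = - q.sgn (.inr (Fin.cast h.len j)) := by
        simp only [TCP.sgn, TCP.ncolor, h.col j]
        by_cases hb : q.loColor (Fin.cast h.len j) = true <;> simp [hb]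
      rw [hsgnj]
      simp only [finCongr_apply]
      by_cases hc : E (.inl (.inr (Fin.cast h.len j)))
      · rw [if_pos (hEiff.mpr hc), if_pos hc]
      · rw [if_neg (fun hh => hc (hEiff.mp hh)), if_neg hc]
    have key : (TCP.comp p q h).csum ((TCP.comp p q h).blockOf x)
        = (∑ z ∈ Tq, q.sgn z) + (∑ z ∈ Tp, p.sgn z) := by
      rw [csum_blockOf_eq]
      have hsgnU : ∀ j : Fin (TCP.comp p q h).upper, (TCP.comp p q h).sgn (.inl j) = q.sgn (.inl j) :=
        fun j => rfl
      have hsgnL : ∀ i : Fin (TCP.comp p q h).lower, (TCP.comp p q h).sgn (.inr i) = p.sgn (.inr i) :=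
        fun i => rfl
      rw [Finset.sum_filter, Fintype.sum_sum_type]
      rw [hTq, hTp, Finset.sum_filter, Finset.sum_filter,
        Fintype.sum_sum_type, Fintype.sum_sum_type]
      simp only [hsgnU, hsgnL]
      have hrel1 : ∀ j : Fin (TCP.comp p q h).upper,
          ((TCP.comp p q h).rel.r x (.inl j)) = E (.inl (.inl j)) := fun _ => rfl
      have hrel2 : ∀ i : Fin (TCP.comp p q h).lower,
          ((TCP.comp p q h).rel.r x (.inr i)) = E (.inr (.inr i)) := fun _ => rfl
      simp only [hrel1, hrel2]
      have hcancel : ∑ i : Fin q.lower, (if E (.inl (.inr i)) then q.sgn (.inr i) else 0)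
          + ∑ j : Fin p.upper, (if E (.inr (.inl j)) then p.sgn (.inl j) else 0) = 0 := by
        rw [hmid, ← Finset.sum_add_distrib]
        apply Finset.sum_eq_zero
        intro i _
        by_cases hc : E (.inl (.inr i)) <;> simp [hc]
      have e1 : (∑ x : Fin (TCP.comp p q h).upper,
            (if E (Sum.inl (Sum.inl x)) then q.sgn (Sum.inl x) else 0))
          = ∑ a : Fin q.upper,
            (if E (Sum.inl (Sum.inl a)) then q.sgn (Sum.inl a) else 0) := rfl
      have e2 : (∑ x : Fin (TCP.comp p q h).lower,
            (if E (Sum.inr (Sum.inr x)) then p.sgn (Sum.inr x) else 0))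
          = ∑ a : Fin p.lower,
            (if E (Sum.inr (Sum.inr a)) then p.sgn (Sum.inr a) else 0) := rfl
      linarith [hcancel, e1, e2]
    rw [key]
    have hdq : (g : ℤ) ∣ ∑ z ∈ Tq, q.sgn z := by
      refine dvd_sum_saturated q.rel q.sgn _ (fun z => hq _ ⟨z, rfl⟩) Tq ?_
      intro a ha y hay
      rw [hTq, Finset.mem_filter] at ha ⊢
      refine ⟨Finset.mem_univ _, ?_⟩
      refine Relation.EqvGen.trans _ _ _ ha.2 (Relation.EqvGen.rel _ _ ?_)
      exact Or.inl ⟨a, y, rfl, rfl, hay⟩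
    have hdp : (g : ℤ) ∣ ∑ z ∈ Tp, p.sgn z := by
      refine dvd_sum_saturated p.rel p.sgn _ (fun z => hp _ ⟨z, rfl⟩) Tp ?_
      intro a ha y hay
      rw [hTp, Finset.mem_filter] at ha ⊢
      refine ⟨Finset.mem_univ _, ?_⟩
      refine Relation.EqvGen.trans _ _ _ ha.2 (Relation.EqvGen.rel _ _ ?_)
      exact Or.inr (Or.inl ⟨a, y, rfl, rfl, hay⟩)
    exact dvd_add hdq hdp
end
end
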